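/- arXiv:1811.11986 — 12 statements merged into one kernel-verified Lean document; each statement's English description precedes it below -/
import Mathlib

section
/- For any two decoding pairs (i1, j1) and (i2, j2) in D with i1 ≠ i2: i1 > i2 if and only if j1 > j2. (Corollary 1, ordering of decoding pairs.) -/
/-- MT `i` is connected to BS `j` iff `i - L ≤ j ≤ i` (truncated subtraction). -/
def Connected (L i j : ℕ) : Prop := i - L ≤ j ∧ j ≤ i

/-- `C` is a valid cell association for a `K`-user network with per-MT constraint `Nc`. -/
def IsCellAssoc (K Nc : ℕ) (C : ℕ → Finset ℕ) : Prop :=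
  ∀ i ∈ Finset.Icc 1 K, C i ⊆ Finset.Icc 1 K ∧ (C i).card ≤ Nc

/-- A combinatorial uplink zero-forcing scheme for the association `C`:
a finite set `D` of decoding pairs `(i, j)` (message `W i` decoded at BS `j`)
with a strict linear order `lt` on `D` such that
(a) every pair satisfies `j ∈ C i` and BS `j` is connected to MT `i`;
(b) distinct pairs differ in both coordinates;
(c) for pairs `(i,j), (i',j')` with `i ≠ i'`, if BS `j'` is connected to MT `i`
then `j' ∈ C i` and `(i,j)` precedes `(i',j')`. -/
structure UplinkScheme (K L : ℕ) (C : ℕ → Finset ℕ) where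
  D : Finset (ℕ × ℕ)
  lt : ℕ × ℕ → ℕ × ℕ → Prop
  lt_irrefl : ∀ p ∈ D, ¬ lt p p
  lt_trans : ∀ p ∈ D, ∀ q ∈ D, ∀ r ∈ D, lt p q → lt q r → lt p r
  lt_total : ∀ p ∈ D, ∀ q ∈ D, p ≠ q → lt p q ∨ lt q p
  mem_range : ∀ p ∈ D, p.1 ∈ Finset.Icc 1 K ∧ p.2 ∈ Finset.Icc 1 K
  assoc : ∀ p ∈ D, p.2 ∈ C p.1
  conn : ∀ p ∈ D, Connected L p.1 p.2
  distinct : ∀ p ∈ D, ∀ q ∈ D, p ≠ q → p.1 ≠ q.1 ∧ p.2 ≠ q.2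
  zf : ∀ p ∈ D, ∀ q ∈ D, p.1 ≠ q.1 → Connected L p.1 q.2 → q.2 ∈ C p.1 ∧ lt p q

/-- MT `i` is active in the uplink scheme: some pair `(i, j)` is in `D`. -/
def UplinkScheme.ActiveMT {K L : ℕ} {C : ℕ → Finset ℕ} (S : UplinkScheme K L C) (i : ℕ) : Prop :=
  i ∈ S.D.image Prod.fst

/-- BS `j` is active in the uplink scheme: some pair `(i, j)` is in `D`. -/
def UplinkScheme.ActiveBS {K L : ℕ} {C : ℕ → Finset ℕ} (S : UplinkScheme K L C) (j : ℕ) : Prop :=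
  j ∈ S.D.image Prod.snd

/-- Corollary 1 (ordering of decoding pairs): for two decoding pairs with distinct MT
indices, `i1 > i2` if and only if `j1 > j2`. -/
theorem decoding_pairs_ordering (K L Nc : ℕ) (hK : 0 < K) (hL : 0 < L) (hNc : 0 < Nc)
    (C : ℕ → Finset ℕ) (hC : IsCellAssoc K Nc C) (S : UplinkScheme K L C)
    (i1 j1 i2 j2 : ℕ) (h1 : (i1, j1) ∈ S.D) (h2 : (i2, j2) ∈ S.D) (hne : i1 ≠ i2) :
    (i2 < i1 ↔ j2 < j1) := by
  have key : ∀ a1 b1 a2 b2 : ℕ, (a1, b1) ∈ S.D → (a2, b2) ∈ S.D → a2 < a1 → b2 < b1 := by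
    intro a1 b1 a2 b2 g1 g2 hlt
    by_contra hb
    push_neg at hb
    have hane : a1 ≠ a2 := (Nat.ne_of_lt hlt).symm
    have hpne : ((a1, b1) : ℕ × ℕ) ≠ (a2, b2) := by
      intro h; exact hane (congrArg Prod.fst h)
    have hbne : b1 ≠ b2 := (S.distinct _ g1 _ g2 hpne).2
    have hb' : b1 < b2 := lt_of_le_of_ne hb hbne
    have c1 := S.conn _ g1
    have c2 := S.conn _ g2
    -- Connected L a1 b2 : a1 - L ≤ b2 ≤ a1
    have conn12 : Connected L a1 b2 :=
      ⟨le_trans c1.1 (le_of_lt hb'), le_trans c2.2 (le_of_lt hlt)⟩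
    -- Connected L a2 b1 : a2 - L ≤ b1 ≤ a2
    have conn21 : Connected L a2 b1 :=
      ⟨le_trans (Nat.sub_le_sub_right (le_of_lt hlt) L) c1.1,
       le_trans (le_of_lt hb') c2.2⟩
    have l1 := (S.zf _ g1 _ g2 hane conn12).2
    have l2 := (S.zf _ g2 _ g1 hane.symm conn21).2
    exact S.lt_irrefl _ g1 (S.lt_trans _ g1 _ g2 _ g1 l1 l2)
  constructor
  · exact key i1 j1 i2 j2 h1 h2
  · intro hj
    rcases lt_or_gt_of_ne hne with h | h
    · exact absurd (key i2 j2 i1 j1 h2 h1 h) (not_lt.mpr (le_of_lt hj))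
    · exact h
end

section
/- For every set 𝓛 of L+1 consecutive indices {a, a+1, …, a+L} ⊆ {1,…,K}, the number of decoding pairs (i,j) ∈ D with both i ∈ 𝓛 and j ∈ 𝓛 is at most N_c. (Lemma 3: at most N_c messages with indices in 𝓛 can be decoded at base stations with indices in 𝓛.) -/
/-- Lemma 3: for any set of `L + 1` consecutive indices `{a, …, a + L} ⊆ {1,…,K}`,
at most `Nc` messages with indices in the set are decoded at base stations with
indices in the set. -/
theorem subnetwork_decoding_bound (K L Nc : ℕ) (hK : 0 < K) (hL : 0 < L) (hNc : 0 < Nc)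
    (C : ℕ → Finset ℕ) (hC : IsCellAssoc K Nc C) (S : UplinkScheme K L C)
    (a : ℕ) (ha : 1 ≤ a) (haK : a + L ≤ K) :
    (S.D.filter (fun p => p.1 ∈ Finset.Icc a (a + L) ∧ p.2 ∈ Finset.Icc a (a + L))).card
      ≤ Nc := by
  set F := S.D.filter (fun p => p.1 ∈ Finset.Icc a (a + L) ∧ p.2 ∈ Finset.Icc a (a + L)) with hF
  rcases F.eq_empty_or_nonempty with h | hne
  · simp [h]
  obtain ⟨p, hpF, hmax⟩ := F.exists_max_image Prod.fst hne
  have hpD : p ∈ S.D := (Finset.mem_filter.mp hpF).1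
  have hpI := (Finset.mem_filter.mp hpF).2
  have hp1 : p.1 ∈ Finset.Icc 1 K := (S.mem_range p hpD).1
  -- all second coordinates of F lie in C p.1
  have hsub : F.image Prod.snd ⊆ C p.1 := by
    intro j hj
    obtain ⟨q, hqF, hqj⟩ := Finset.mem_image.mp hj
    have hqD : q ∈ S.D := (Finset.mem_filter.mp hqF).1
    have hqI := (Finset.mem_filter.mp hqF).2
    by_cases hiq : p.1 = q.1
    · have hpq : p = q := by
        by_contra hne'
        exact (S.distinct p hpD q hqD hne').1 hiq
      subst hqj hpq
      exact S.assoc p hpD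
    · have hconn : Connected L p.1 q.2 := by
        obtain ⟨h1a, h1b⟩ := S.conn q hqD
        have h2 := hmax q hqF
        simp only [Finset.mem_Icc] at hpI hqI
        exact ⟨by omega, by omega⟩
      rw [← hqj]
      exact (S.zf p hpD q hqD hiq hconn).1
  have hinj : Set.InjOn Prod.snd (F : Set (ℕ × ℕ)) := by
    intro x hx y hy hxy
    by_contra hne'
    exact (S.distinct x (Finset.mem_filter.mp hx).1 y (Finset.mem_filter.mp hy).1 hne').2 hxy
  calc F.card = (F.image Prod.snd).card := (Finset.card_image_of_injOn hinj).symm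
    _ ≤ (C p.1).card := Finset.card_le_card hsub
    _ ≤ Nc := (hC p.1 hp1).2
end

section
/- For every block of L+2 consecutive indices {a, a+1, …, a+L+1} ⊆ {1,…,K}, the number of decoding pairs (i,j) ∈ D with both i and j in the block is at most N_c + 1. (Subnetwork-only uplink decoding cannot decode more than N_c + 1 words in a subnetwork of size L+2.) -/
/-- Subnetwork-only uplink decoding: for any block of `L + 2` consecutive indices
`{a, …, a + L + 1} ⊆ {1,…,K}`, at most `Nc + 1` messages with indices in the block
are decoded at base stations with indices in the block. -/
theorem subnetwork_only_decoding_bound (K L Nc : ℕ) (hK : 0 < K) (hL : 0 < L) (hNc : 0 < Nc)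
    (C : ℕ → Finset ℕ) (hC : IsCellAssoc K Nc C) (S : UplinkScheme K L C)
    (a : ℕ) (ha : 1 ≤ a) (haK : a + L + 1 ≤ K) :
    (S.D.filter (fun p => p.1 ∈ Finset.Icc a (a + L + 1) ∧ p.2 ∈ Finset.Icc a (a + L + 1))).card
      ≤ Nc + 1 := by
  set F := S.D.filter (fun p => p.1 ∈ Finset.Icc a (a + L + 1) ∧ p.2 ∈ Finset.Icc a (a + L + 1))
    with hF
  rcases F.eq_empty_or_nonempty with h | hne
  · simp [h]
  obtain ⟨p, hpF, hpmax⟩ := F.exists_max_image Prod.fst hne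
  have hpD : p ∈ S.D := (Finset.mem_filter.mp hpF).1
  have hpI := (Finset.mem_filter.mp hpF).2
  simp only [Finset.mem_Icc] at hpI
  have hcard : F.card ≤ (C p.1 ∪ {a}).card := by
    apply Finset.card_le_card_of_injOn Prod.snd
    · intro q hqF
      have hqD : q ∈ S.D := (Finset.mem_filter.mp hqF).1
      have hqI := (Finset.mem_filter.mp hqF).2
      simp only [Finset.mem_Icc] at hqI
      have hq1p1 : q.1 ≤ p.1 := hpmax q hqF
      have hconnq := S.conn q hqD
      rw [Connected] at hconnq
      by_cases hc : Connected L p.1 q.2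
      · by_cases hpq : q = p
        · subst hpq
          exact Finset.mem_union_left _ (S.assoc q hqD)
        · have hne1 : p.1 ≠ q.1 := (S.distinct p hpD q hqD (fun e => hpq e.symm)).1
          exact Finset.mem_union_left _ (S.zf p hpD q hqD hne1 hc).1
      · rw [Connected] at hc
        push_neg at hc
        have : q.2 = a := by omega
        simp [this]
    · intro q hqF r hrF hqr
      by_contra hne'
      exact (S.distinct q (Finset.mem_coe.mp hqF |> Finset.mem_filter.mp |>.1)
        r (Finset.mem_coe.mp hrF |> Finset.mem_filter.mp |>.1) hne').2 hqr
  have hp1K : p.1 ∈ Finset.Icc 1 K := Finset.mem_Icc.mpr ⟨by omega, by omega⟩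
  have hCcard := (hC p.1 hp1K).2
  calc F.card ≤ (C p.1 ∪ {a}).card := hcard
    _ ≤ (C p.1).card + ({a} : Finset ℕ).card := Finset.card_union_le _ _
    _ ≤ Nc + 1 := by simpa using hCcard
end

section
/- If mobile terminal i is active, then the number of active base stations j with i − L ≤ j ≤ i (i.e., active base stations connected to MT i) is at most N_c. (A message's interference cannot be canceled at N_c or more receivers; used in the converse for N_c = L.) -/
/-- If MT `i` is active, then at most `Nc` of the base stations connected to it
(those with `i - L ≤ j ≤ i`) are active. -/
theorem active_BS_around_active_MT (K L Nc : ℕ) (hK : 0 < K) (hL : 0 < L) (hNc : 0 < Nc)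
    (C : ℕ → Finset ℕ) (hC : IsCellAssoc K Nc C) (S : UplinkScheme K L C)
    (i : ℕ) (hi : S.ActiveMT i) :
    ((Finset.Icc (i - L) i).filter (fun j => j ∈ S.D.image Prod.snd)).card ≤ Nc := by
  obtain ⟨p, hpD, hp1⟩ := Finset.mem_image.mp hi
  have hiK : i ∈ Finset.Icc 1 K := hp1 ▸ (S.mem_range p hpD).1
  have hsub : ((Finset.Icc (i - L) i).filter (fun j => j ∈ S.D.image Prod.snd)) ⊆ C i := by
    intro j hj
    rw [Finset.mem_filter, Finset.mem_Icc] at hj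
    obtain ⟨⟨h1, h2⟩, hj'⟩ := hj
    obtain ⟨q, hqD, hq2⟩ := Finset.mem_image.mp hj'
    by_cases hpq : p.1 = q.1
    · have : p = q := by
        by_contra hne
        exact (S.distinct p hpD q hqD hne).1 hpq
      subst this
      rw [← hp1, ← hq2]
      exact S.assoc p hpD
    · have := S.zf p hpD q hqD hpq (by rw [hp1, hq2]; exact ⟨h1, h2⟩)
      exact hp1 ▸ hq2 ▸ this.1
  exact le_trans (Finset.card_le_card hsub) (hC i hiK).2
end

section
/- Suppose N_c ≤ L. If the N_c + 1 consecutive base stations j, j+1, …, j+N_c are all active, then every mobile terminal i connected to all of them (i.e., every i with j + N_c ≤ i ≤ j + L) is inactive. (If N_c + 1 consecutive receivers are active, the transmitter connected to all these receivers must be inactive.) -/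
/-- If `Nc ≤ L` and the `Nc + 1` consecutive base stations `j, j+1, …, j+Nc` are all
active, then every mobile terminal connected to all of them (every `i` with
`j + Nc ≤ i ≤ j + L`, `i ≤ K`) is inactive. -/
theorem transmitter_inactive_of_consecutive_active_BS (K L Nc : ℕ)
    (hK : 0 < K) (hL : 0 < L) (hNc : 0 < Nc) (hNcL : Nc ≤ L)
    (C : ℕ → Finset ℕ) (hC : IsCellAssoc K Nc C) (S : UplinkScheme K L C)
    (j : ℕ) (hj : 1 ≤ j) (hjK : j + Nc ≤ K)
    (hact : ∀ b ∈ Finset.Icc j (j + Nc), S.ActiveBS b)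
    (i : ℕ) (hi1 : j + Nc ≤ i) (hi2 : i ≤ j + L) (hiK : i ≤ K) :
    ¬ S.ActiveMT i := by
  intro hactMT
  obtain ⟨p, hpD, hp1⟩ := Finset.mem_image.mp hactMT
  have hiK1 : i ∈ Finset.Icc 1 K := Finset.mem_Icc.mpr ⟨le_trans hj (le_trans (Nat.le_add_right j Nc) hi1), hiK⟩
  have hsub : Finset.Icc j (j + Nc) ⊆ C i := by
    intro b hb
    obtain ⟨hb1, hb2⟩ := Finset.mem_Icc.mp hb
    obtain ⟨q, hqD, hq2⟩ := Finset.mem_image.mp (hact b hb)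
    have hconn : Connected L i b := by
      constructor
      · exact le_trans (by omega : i - L ≤ j) hb1
      · omega
    by_cases hq1 : q.1 = i
    · -- then q = p by distinct, so b = p.2 ∈ C i
      by_cases hqp : q = p
      · rw [← hq1, ← hq2]; exact S.assoc q hqD
      · exact absurd (hq1.trans hp1.symm) (S.distinct q hqD p hpD hqp).1
    · have := S.zf p hpD q hqD (by rw [hp1]; exact fun h => hq1 h.symm)
        (by rw [hp1, hq2]; exact hconn)
      rw [hp1, hq2] at this
      exact this.1
  have hcard := (hC i hiK1).2
  have : Nc + 1 ≤ (C i).card := by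
    calc Nc + 1 = (Finset.Icc j (j + Nc)).card := by rw [Nat.card_Icc]; omega
    _ ≤ (C i).card := Finset.card_le_card hsub
  omega
end

section
/- Suppose N_c = L. If all L + 2 base stations with indices in a block of L + 2 consecutive indices {a, …, a+L+1} ⊆ {1,…,K} are active, then at most N_c = L of the L + 2 mobile terminals with indices in that block are active. (Step Γ_BS ⊆ Φ_MT in the converse proof of the uplink puDoF for N_c = L.) -/
/-- For `Nc = L`: if all `L + 2` base stations of a block of `L + 2` consecutive
indices are active, then at most `Nc = L` of the mobile terminals with indices in
the block are active. -/
theorem all_BS_active_implies_few_MT_active (K L Nc : ℕ)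
    (hK : 0 < K) (hL : 0 < L) (hNc : Nc = L)
    (C : ℕ → Finset ℕ) (hC : IsCellAssoc K Nc C) (S : UplinkScheme K L C)
    (a : ℕ) (ha : 1 ≤ a) (haK : a + L + 1 ≤ K)
    (hact : ∀ b ∈ Finset.Icc a (a + L + 1), S.ActiveBS b) :
    ((Finset.Icc a (a + L + 1)).filter (fun i => i ∈ S.D.image Prod.fst)).card ≤ Nc := by
  have hsub : ((Finset.Icc a (a + L + 1)).filter (fun i => i ∈ S.D.image Prod.fst)) ⊆
      Finset.Icc a (a + L - 1) := by
    intro i hi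
    rw [Finset.mem_filter] at hi
    obtain ⟨hi1, hi2⟩ := hi
    rw [Finset.mem_Icc] at hi1
    rw [Finset.mem_image] at hi2
    obtain ⟨p, hp, hpi⟩ := hi2
    rw [Finset.mem_Icc]
    refine ⟨hi1.1, ?_⟩
    by_contra hgt
    have hiL : a + L ≤ i := by omega
    have key : Finset.Icc (i - L) i ⊆ C i := by
      intro b hb
      rw [Finset.mem_Icc] at hb
      have hbblk : b ∈ Finset.Icc a (a + L + 1) := by
        rw [Finset.mem_Icc]; omega
      have hbact := hact b hbblk
      rw [UplinkScheme.ActiveBS, Finset.mem_image] at hbact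
      obtain ⟨q, hq, hqb⟩ := hbact
      by_cases hiq : q.1 = i
      · have := S.assoc q hq
        rw [hiq, hqb] at this
        exact this
      · have hconn : Connected L p.1 q.2 := by
          rw [hpi, hqb]; exact ⟨hb.1, hb.2⟩
        have := (S.zf p hp q hq (by rw [hpi]; exact fun h => hiq h.symm) hconn).1
        rwa [hpi, hqb] at this
    have hicard : (Finset.Icc (i - L) i).card ≤ Nc := by
      refine le_trans (Finset.card_le_card key) ?_
      exact (hC i (by rw [Finset.mem_Icc]; omega)).2
    rw [Nat.card_Icc] at hicard
    omega
  refine le_trans (Finset.card_le_card hsub) ?_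
  rw [Nat.card_Icc]
  omega
end

section
/- If N_c ≥ L + 1, then there exist a cell association C_1,…,C_K with |C_i| ≤ N_c for all i and a combinatorial uplink zero-forcing scheme for it in which every mobile terminal is active, i.e., |D| = K. (Achievability of uplink per-user DoF equal to 1 in Theorem 1, via associating each MT with all L + 1 base stations connected to it and decoding from the highest index downwards.) -/
/-- Achievability of uplink per-user DoF 1 (Theorem 1, `Nc ≥ L + 1`): there is a cell
association and an uplink zero-forcing scheme in which every mobile terminal is active. -/
theorem uplink_full_dof_achievable (K L Nc : ℕ) (hK : 0 < K) (hL : 0 < L)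
    (hNc : L + 1 ≤ Nc) :
    ∃ C : ℕ → Finset ℕ, IsCellAssoc K Nc C ∧
      ∃ S : UplinkScheme K L C, S.D.card = K := by
  classical
  refine ⟨fun i => Finset.Icc 1 K ∩ Finset.Icc (i - L) i, ?_, ?_⟩
  · intro i hi
    refine ⟨Finset.inter_subset_left, ?_⟩
    calc (Finset.Icc 1 K ∩ Finset.Icc (i - L) i).card
        ≤ (Finset.Icc (i - L) i).card := Finset.card_le_card Finset.inter_subset_right
      _ = i + 1 - (i - L) := Nat.card_Icc _ _
      _ ≤ L + 1 := by omega
      _ ≤ Nc := hNc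
  · refine ⟨⟨(Finset.Icc 1 K).image (fun i => (i, i)),
      fun p q => q.1 < p.1, ?_, ?_, ?_, ?_, ?_, ?_, ?_, ?_⟩, ?_⟩
    · intro p _; omega
    · intro p _ q _ r _ h1 h2; omega
    · intro p hp q hq hpq
      simp only [Finset.mem_image] at hp hq
      obtain ⟨a, _, rfl⟩ := hp
      obtain ⟨b, _, rfl⟩ := hq
      rcases Nat.lt_trichotomy a b with h | h | h
      · exact Or.inr h
      · exact absurd (by rw [h]) hpq
      · exact Or.inl h
    · intro p hp
      simp only [Finset.mem_image] at hp
      obtain ⟨a, ha, rfl⟩ := hp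
      exact ⟨ha, ha⟩
    · intro p hp
      simp only [Finset.mem_image] at hp
      obtain ⟨a, ha, rfl⟩ := hp
      simp only [Finset.mem_inter]
      simp only [Finset.mem_Icc] at ha ⊢
      omega
    · intro p hp
      simp only [Finset.mem_image] at hp
      obtain ⟨a, ha, rfl⟩ := hp
      exact ⟨Nat.sub_le _ _, le_refl _⟩
    · intro p hp q hq hpq
      simp only [Finset.mem_image] at hp hq
      obtain ⟨a, _, rfl⟩ := hp
      obtain ⟨b, _, rfl⟩ := hq
      constructor <;> (intro h; simp only at h; exact hpq (by rw [h]))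
    · intro p hp q hq hne hc
      simp only [Finset.mem_image] at hp hq
      obtain ⟨a, ha, rfl⟩ := hp
      obtain ⟨b, hb, rfl⟩ := hq
      obtain ⟨h1, h2⟩ := hc
      simp only at hne
      refine ⟨?_, ?_⟩
      · simp only [Finset.mem_inter, Finset.mem_Icc] at hb ⊢
        omega
      · simp only
        omega
    · rw [Finset.card_image_of_injective _ (fun a b h => (Prod.mk.injEq _ _ _ _ ▸ h).1)]
      simp [Nat.card_Icc]
end

section
/- If 2·N_c ≥ L and N_c ≤ L, then there exist a cell association C_1,…,C_K with |C_i| ≤ N_c for all i and a combinatorial uplink zero-forcing scheme for it with at least (N_c + 1)·⌊K/(L+2)⌋ decoding pairs. (Achievability part of Theorem 1 for the range L/2 ≤ N_c ≤ L: uplink per-user DoF (N_c+1)/(L+2) is achievable, decoding N_c + 1 words in each subnetwork of L + 2 consecutive users.) -/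
/-- The local MT index for decoding slot `k` in a block: `k` for `k ≤ Nc`, and `L+2` for
slot `Nc+1`. -/
def mtOf (L Nc k : ℕ) : ℕ := if k = Nc + 1 then L + 2 else k

/-- The decoding pairs: in each block `b` of `L+2` users, pairs `(s+k, s+k)` for
`k = 1, …, Nc` and `(s+L+2, s+Nc+1)`, where `s = b(L+2)`. -/
def schemeD (K L Nc : ℕ) : Finset (ℕ × ℕ) :=
  ((Finset.range (K / (L + 2))) ×ˢ (Finset.Icc 1 (Nc + 1))).image
    (fun bk => (bk.1 * (L + 2) + mtOf L Nc bk.2, bk.1 * (L + 2) + bk.2))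

/-- The cell association: an active MT is associated with every used BS it is connected to. -/
def schemeC (K L Nc : ℕ) (i : ℕ) : Finset ℕ :=
  if i ∈ (schemeD K L Nc).image Prod.fst then
    (Finset.Icc (i - L) i) ∩ ((schemeD K L Nc).image Prod.snd)
  else ∅

lemma mul_block_le {c b2 b : ℕ} (h : b2 < b) : b2 * c + c ≤ b * c := by
  calc b2 * c + c = (b2 + 1) * c := by ring
  _ ≤ b * c := Nat.mul_le_mul_right c h

lemma mul_block_le2 {c b2 b : ℕ} (h : b2 + 2 ≤ b) : b2 * c + c + c ≤ b * c := by
  calc b2 * c + c + c = (b2 + 2) * c := by ring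
  _ ≤ b * c := Nat.mul_le_mul_right c h

lemma mtOf_bounds {L Nc k : ℕ} (h2 : Nc ≤ L) (hk1 : 1 ≤ k) (hk2 : k ≤ Nc + 1) :
    1 ≤ mtOf L Nc k ∧ mtOf L Nc k ≤ L + 2 ∧ k ≤ mtOf L Nc k := by
  unfold mtOf; split <;> omega

lemma mtOf_inj {L Nc k k2 : ℕ} (h2 : Nc ≤ L) (hk1 : 1 ≤ k) (hk2 : k ≤ Nc + 1)
    (hq1 : 1 ≤ k2) (hq2 : k2 ≤ Nc + 1) (h : mtOf L Nc k = mtOf L Nc k2) : k = k2 := by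
  unfold mtOf at h; split_ifs at h <;> omega

lemma block_eq {L b b2 k k2 : ℕ} (hk1 : 1 ≤ k) (hkL : k ≤ L + 2) (hk21 : 1 ≤ k2)
    (hk2L : k2 ≤ L + 2) (h : b * (L + 2) + k = b2 * (L + 2) + k2) : b = b2 ∧ k = k2 := by
  rcases Nat.lt_trichotomy b b2 with hb | hb | hb
  · have := mul_block_le (c := L + 2) hb; omega
  · subst hb; omega
  · have := mul_block_le (c := L + 2) hb; omega

lemma mem_schemeD {K L Nc : ℕ} {p : ℕ × ℕ} :
    p ∈ schemeD K L Nc ↔ ∃ b k, b < K / (L + 2) ∧ 1 ≤ k ∧ k ≤ Nc + 1 ∧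
      p = (b * (L + 2) + mtOf L Nc k, b * (L + 2) + k) := by
  constructor
  · intro hp
    simp only [schemeD, Finset.mem_image, Finset.mem_product, Finset.mem_range,
      Finset.mem_Icc] at hp
    obtain ⟨⟨b, k⟩, ⟨hb, hk1, hk2⟩, hpe⟩ := hp
    exact ⟨b, k, hb, hk1, hk2, hpe.symm⟩
  · rintro ⟨b, k, hb, hk1, hk2, rfl⟩
    simp only [schemeD, Finset.mem_image, Finset.mem_product, Finset.mem_range,
      Finset.mem_Icc]
    exact ⟨(b, k), ⟨hb, hk1, hk2⟩, rfl⟩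

lemma mem_schemeD_snd {K L Nc j : ℕ} :
    j ∈ (schemeD K L Nc).image Prod.snd ↔ ∃ b k, b < K / (L + 2) ∧ 1 ≤ k ∧ k ≤ Nc + 1 ∧
      j = b * (L + 2) + k := by
  constructor
  · intro hj
    obtain ⟨p, hp, hpe⟩ := Finset.mem_image.1 hj
    obtain ⟨b, k, hb, hk1, hk2, rfl⟩ := mem_schemeD.1 hp
    exact ⟨b, k, hb, hk1, hk2, hpe.symm⟩
  · rintro ⟨b, k, hb, hk1, hk2, rfl⟩
    exact Finset.mem_image.2 ⟨_, mem_schemeD.2 ⟨b, k, hb, hk1, hk2, rfl⟩, rfl⟩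

/-- Budget lemma: an active MT is connected to at most `Nc` used BSs. -/
lemma budget {K L Nc : ℕ} (hNc : 0 < Nc) (h2 : Nc ≤ L) {b k : ℕ}
    (hk1 : 1 ≤ k) (hk2 : k ≤ Nc + 1) :
    ((Finset.Icc (b * (L + 2) + mtOf L Nc k - L) (b * (L + 2) + mtOf L Nc k)) ∩
      ((schemeD K L Nc).image Prod.snd)).card ≤ Nc := by
  by_cases hk : k = Nc + 1
  · -- m = L + 2
    have hsub : ((Finset.Icc (b * (L + 2) + mtOf L Nc k - L) (b * (L + 2) + mtOf L Nc k)) ∩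
        ((schemeD K L Nc).image Prod.snd)) ⊆
        (Finset.Icc 2 (Nc + 1)).image (fun t => b * (L + 2) + t) := by
      intro j hj
      obtain ⟨hjw, hjs⟩ := Finset.mem_inter.1 hj
      rw [Finset.mem_Icc] at hjw
      obtain ⟨b2, k2, hb2, hk21, hk22, rfl⟩ := mem_schemeD_snd.1 hjs
      have hm : mtOf L Nc k = L + 2 := by simp [mtOf, hk]
      rw [hm] at hjw
      have hcase : b2 = b ∨ b2 < b ∨ b < b2 := by omega
      rcases hcase with hc | hc | hc
      · subst hc
        simp only [Finset.mem_image, Finset.mem_Icc]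
        exact ⟨k2, ⟨by omega, hk22⟩, rfl⟩
      · have := mul_block_le (c := L + 2) hc; omega
      · have := mul_block_le (c := L + 2) hc; omega
    calc _ ≤ ((Finset.Icc 2 (Nc + 1)).image (fun t => b * (L + 2) + t)).card :=
          Finset.card_le_card hsub
      _ ≤ (Finset.Icc 2 (Nc + 1)).card := Finset.card_image_le
      _ ≤ Nc := by rw [Nat.card_Icc]; omega
  · -- m = k ≤ Nc
    have hm : mtOf L Nc k = k := by simp [mtOf, hk]
    rw [hm]
    have hsub : ((Finset.Icc (b * (L + 2) + k - L) (b * (L + 2) + k)) ∩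
        ((schemeD K L Nc).image Prod.snd)) ⊆
        ((Finset.Icc 1 k).image (fun t => b * (L + 2) + t)) ∪
        ((Finset.Icc (k + 2) (Nc + 1)).image (fun t => (b - 1) * (L + 2) + t)) := by
      intro j hj
      obtain ⟨hjw, hjs⟩ := Finset.mem_inter.1 hj
      rw [Finset.mem_Icc] at hjw
      obtain ⟨b2, k2, hb2, hk21, hk22, rfl⟩ := mem_schemeD_snd.1 hjs
      have hcase : b2 = b ∨ b2 + 1 = b ∨ b2 + 2 ≤ b ∨ b < b2 := by omega
      rcases hcase with hc | hc | hc | hc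
      · subst hc
        refine Finset.mem_union_left _ ?_
        simp only [Finset.mem_image, Finset.mem_Icc]
        exact ⟨k2, ⟨hk21, by omega⟩, rfl⟩
      · have hb1 : b - 1 = b2 := by omega
        have heq : b2 * (L + 2) + (L + 2) = b * (L + 2) := by
          calc b2 * (L + 2) + (L + 2) = (b2 + 1) * (L + 2) := by ring
            _ = b * (L + 2) := by rw [hc]
        refine Finset.mem_union_right _ ?_
        simp only [Finset.mem_image, Finset.mem_Icc, hb1]
        exact ⟨k2, ⟨by omega, hk22⟩, rfl⟩
      · have := mul_block_le2 (c := L + 2) hc; omega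
      · have := mul_block_le (c := L + 2) hc; omega
    calc _ ≤ (((Finset.Icc 1 k).image (fun t => b * (L + 2) + t)) ∪
          ((Finset.Icc (k + 2) (Nc + 1)).image (fun t => (b - 1) * (L + 2) + t))).card :=
          Finset.card_le_card hsub
      _ ≤ ((Finset.Icc 1 k).image (fun t => b * (L + 2) + t)).card +
          ((Finset.Icc (k + 2) (Nc + 1)).image (fun t => (b - 1) * (L + 2) + t)).card :=
          Finset.card_union_le _ _
      _ ≤ (Finset.Icc 1 k).card + (Finset.Icc (k + 2) (Nc + 1)).card := by
          exact Nat.add_le_add Finset.card_image_le Finset.card_image_le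
      _ ≤ Nc := by rw [Nat.card_Icc, Nat.card_Icc]; omega


/-- Achievability part of Theorem 1 for `L/2 ≤ Nc ≤ L`: there is a cell association
and an uplink zero-forcing scheme with at least `(Nc + 1)·⌊K/(L+2)⌋` decoding pairs. -/
theorem uplink_mid_range_achievable (K L Nc : ℕ) (hK : 0 < K) (hL : 0 < L) (hNc : 0 < Nc)
    (h1 : L ≤ 2 * Nc) (h2 : Nc ≤ L) :
    ∃ C : ℕ → Finset ℕ, IsCellAssoc K Nc C ∧
      ∃ S : UplinkScheme K L C, (Nc + 1) * (K / (L + 2)) ≤ S.D.card := by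
  -- basic facts
  have hdivK : (K / (L + 2)) * (L + 2) ≤ K := Nat.div_mul_le_self K (L + 2)
  -- every pair of the scheme is in range
  have hrange : ∀ p ∈ schemeD K L Nc, 1 ≤ p.1 ∧ p.1 ≤ K ∧ 1 ≤ p.2 ∧ p.2 ≤ K := by
    intro p hp
    obtain ⟨b, k, hb, hk1, hk2, rfl⟩ := mem_schemeD.1 hp
    obtain ⟨hm1, hm2, hm3⟩ := mtOf_bounds (L := L) h2 hk1 hk2
    have hmul : b * (L + 2) + (L + 2) ≤ (K / (L + 2)) * (L + 2) :=
      mul_block_le (c := L + 2) hb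
    refine ⟨by omega, by simp only; omega, by omega, by simp only; omega⟩
  -- injectivity on first coordinates
  have hfst : ∀ p ∈ schemeD K L Nc, ∀ q ∈ schemeD K L Nc, p.1 = q.1 → p = q := by
    intro p hp q hq hpq
    obtain ⟨b, k, hb, hk1, hk2, rfl⟩ := mem_schemeD.1 hp
    obtain ⟨b2, k2, hb2, hk21, hk22, rfl⟩ := mem_schemeD.1 hq
    simp only at hpq
    obtain ⟨hm1, hm2, _⟩ := mtOf_bounds (L := L) h2 hk1 hk2
    obtain ⟨hm21, hm22, _⟩ := mtOf_bounds (L := L) h2 hk21 hk22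
    obtain ⟨hbe, hme⟩ := block_eq hm1 hm2 hm21 hm22 hpq
    have hke := mtOf_inj h2 hk1 hk2 hk21 hk22 hme
    subst hbe; subst hke; rfl
  have hsnd : ∀ p ∈ schemeD K L Nc, ∀ q ∈ schemeD K L Nc, p.2 = q.2 → p = q := by
    intro p hp q hq hpq
    obtain ⟨b, k, hb, hk1, hk2, rfl⟩ := mem_schemeD.1 hp
    obtain ⟨b2, k2, hb2, hk21, hk22, rfl⟩ := mem_schemeD.1 hq
    simp only at hpq
    obtain ⟨hbe, hke⟩ := block_eq hk1 (by omega) hk21 (by omega) hpq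
    subst hbe; subst hke; rfl
  -- the ordering property
  have horder : ∀ p ∈ schemeD K L Nc, ∀ q ∈ schemeD K L Nc, p.1 ≠ q.1 →
      Connected L p.1 q.2 → q.1 < p.1 := by
    intro p hp q hq hne hc
    obtain ⟨b, k, hb, hk1, hk2, rfl⟩ := mem_schemeD.1 hp
    obtain ⟨b2, k2, hb2, hk21, hk22, rfl⟩ := mem_schemeD.1 hq
    obtain ⟨hcl, hcu⟩ := hc
    simp only at hcl hcu hne ⊢
    obtain ⟨hm1, hm2, hm3⟩ := mtOf_bounds (L := L) h2 hk1 hk2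
    obtain ⟨hm21, hm22, hm23⟩ := mtOf_bounds (L := L) h2 hk21 hk22
    have hcase : b2 = b ∨ b2 < b ∨ b < b2 := by omega
    rcases hcase with hc' | hc' | hc'
    · subst hc'
      -- same block: k2 ≤ mtOf k, and mtOf k2 < mtOf k
      have hk2m : k2 ≤ mtOf L Nc k := by omega
      have : mtOf L Nc k2 < mtOf L Nc k := by
        unfold mtOf at *; split_ifs at * <;> omega
      omega
    · have := mul_block_le (c := L + 2) hc'; omega
    · have := mul_block_le (c := L + 2) hc'; omega
  refine ⟨schemeC K L Nc, ?_, ?_⟩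
  · -- IsCellAssoc
    intro i hi
    constructor
    · -- subset of Icc 1 K
      unfold schemeC
      split_ifs with hact
      · intro j hj
        obtain ⟨_, hjs⟩ := Finset.mem_inter.1 hj
        obtain ⟨p, hp, hpe⟩ := Finset.mem_image.1 hjs
        have := hrange p hp
        rw [Finset.mem_Icc]; omega
      · simp
    · -- card bound
      unfold schemeC
      split_ifs with hact
      · obtain ⟨p, hp, hpe⟩ := Finset.mem_image.1 hact
        obtain ⟨b, k, hb, hk1, hk2, rfl⟩ := mem_schemeD.1 hp
        simp only at hpe
        subst hpe
        exact budget hNc h2 hk1 hk2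
      · simp
  · -- the scheme
    have hCmem : ∀ p ∈ schemeD K L Nc, ∀ j, Connected L p.1 j →
        j ∈ (schemeD K L Nc).image Prod.snd → j ∈ schemeC K L Nc p.1 := by
      intro p hp j hc hj
      unfold schemeC
      rw [if_pos (Finset.mem_image.2 ⟨p, hp, rfl⟩)]
      exact Finset.mem_inter.2 ⟨Finset.mem_Icc.2 ⟨hc.1, hc.2⟩, hj⟩
    have hconn : ∀ p ∈ schemeD K L Nc, Connected L p.1 p.2 := by
      intro p hp
      obtain ⟨b, k, hb, hk1, hk2, rfl⟩ := mem_schemeD.1 hp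
      obtain ⟨hm1, hm2, hm3⟩ := mtOf_bounds (L := L) h2 hk1 hk2
      constructor
      · simp only
        unfold mtOf
        split_ifs <;> omega
      · simp only; omega
    refine ⟨⟨schemeD K L Nc, fun p q => q.1 < p.1, ?_, ?_, ?_, ?_, ?_, ?_, ?_, ?_⟩, ?_⟩
    · intro p _; omega
    · intro p _ q _ r _ h h'; omega
    · intro p hp q hq hne
      have : p.1 ≠ q.1 := fun h => hne (hfst p hp q hq h)
      omega
    · intro p hp
      have := hrange p hp
      constructor <;> rw [Finset.mem_Icc] <;> omega
    · intro p hp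
      exact hCmem p hp p.2 (hconn p hp) (Finset.mem_image.2 ⟨p, hp, rfl⟩)
    · exact hconn
    · intro p hp q hq hne
      exact ⟨fun h => hne (hfst p hp q hq h), fun h => hne (hsnd p hp q hq h)⟩
    · intro p hp q hq hne hc
      exact ⟨hCmem p hp q.2 hc (Finset.mem_image.2 ⟨q, hq, rfl⟩), horder p hp q hq hne hc⟩
    · -- cardinality
      have hcard : (schemeD K L Nc).card = (K / (L + 2)) * (Nc + 1) := by
        unfold schemeD
        rw [Finset.card_image_of_injOn, Finset.card_product, Finset.card_range, Nat.card_Icc]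
        · congr 1
        · rintro ⟨b, k⟩ hm ⟨b2, k2⟩ hm2 heq
          simp only [Finset.mem_product, Finset.mem_range, Finset.mem_Icc,
            Finset.mem_coe] at hm hm2
          have h2e : b * (L + 2) + k = b2 * (L + 2) + k2 := congrArg Prod.snd heq
          obtain ⟨hbe, hke⟩ := block_eq hm.2.1 (by omega) hm2.2.1 (by omega) h2e
          simp [hbe, hke]
      simp only
      rw [hcard, Nat.mul_comm]
end

section
/- If 1 ≤ N_c and 2·N_c ≤ L − 2 (i.e., N_c ≤ L/2 − 1), then there exist a cell association C_1,…,C_K with |C_i| ≤ N_c for all i and a combinatorial uplink zero-forcing scheme for it with at least 2·N_c·⌊K/(2N_c + L)⌋ decoding pairs. (Achievability part of Theorem 1 for the range 1 ≤ N_c ≤ L/2 − 1: uplink per-user DoF 2N_c/(2N_c + L) is achievable via two interference-free groups of N_c users in each subnetwork of 2N_c + L consecutive users.) -/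
/-- BS of the `k`-th decoding pair. -/
def bsF (Nc L k : ℕ) : ℕ := k / (2*Nc) * (2*Nc+L) + k % (2*Nc) + 1

/-- MT of the `k`-th decoding pair. -/
def mtF (Nc L k : ℕ) : ℕ := bsF Nc L k + (if k % (2*Nc) < Nc then 0 else L)

lemma blockCases (M b b' : ℕ) : b = b' ∨ b*M + M ≤ b'*M ∨ b'*M + M ≤ b*M := by
  rcases Nat.lt_trichotomy b b' with h | h | h
  · refine Or.inr (Or.inl ?_)
    calc b*M + M = (b+1)*M := by ring
    _ ≤ b'*M := Nat.mul_le_mul_right M h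
  · exact Or.inl h
  · refine Or.inr (Or.inr ?_)
    calc b'*M + M = (b'+1)*M := by ring
    _ ≤ b*M := Nat.mul_le_mul_right M h

lemma eq_of_div_mod (a b n : ℕ) (h1 : a / n = b / n) (h2 : a % n = b % n) : a = b := by
  conv_lhs => rw [← Nat.div_add_mod a n]
  rw [h1, h2, Nat.div_add_mod]

lemma conn_self (Nc L k : ℕ) : Connected L (mtF Nc L k) (bsF Nc L k) := by
  unfold Connected mtF
  split_ifs <;> omega

lemma analysis (Nc L k k' : ℕ) (h1 : 1 ≤ Nc)
    (hc : Connected L (mtF Nc L k) (bsF Nc L k')) :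
    k / (2*Nc) = k' / (2*Nc) ∧
    ((k % (2*Nc) < Nc ∧ k' % (2*Nc) ≤ k % (2*Nc)) ∨
     (Nc ≤ k % (2*Nc) ∧ Nc ≤ k' % (2*Nc) ∧ k % (2*Nc) ≤ k' % (2*Nc))) := by
  have hq : 0 < 2*Nc := by omega
  have hu : k % (2*Nc) < 2*Nc := Nat.mod_lt _ hq
  have hu' : k' % (2*Nc) < 2*Nc := Nat.mod_lt _ hq
  obtain ⟨hc1, hc2⟩ := hc
  unfold mtF bsF at hc1 hc2
  rcases blockCases (2*Nc+L) (k / (2*Nc)) (k' / (2*Nc)) with hb | hb | hb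
  · rw [hb] at hc1 hc2 ⊢
    split_ifs at hc1 hc2 with hA <;> omega
  · split_ifs at hc1 hc2 with hA <;> omega
  · split_ifs at hc1 hc2 with hA <;> omega
lemma mtF_inj (Nc L : ℕ) (h1 : 1 ≤ Nc) : Function.Injective (mtF Nc L) := by
  intro k k' h
  have hc : Connected L (mtF Nc L k) (bsF Nc L k') := h ▸ conn_self Nc L k'
  have hc' : Connected L (mtF Nc L k') (bsF Nc L k) := h ▸ conn_self Nc L k
  obtain ⟨hb, hg⟩ := analysis Nc L k k' h1 hc
  obtain ⟨_, hg'⟩ := analysis Nc L k' k h1 hc'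
  exact eq_of_div_mod _ _ _ hb (by omega)

lemma bsF_inj (Nc L : ℕ) (h1 : 1 ≤ Nc) : Function.Injective (bsF Nc L) := by
  intro k k' h
  have hc : Connected L (mtF Nc L k) (bsF Nc L k') := h ▸ conn_self Nc L k
  have hc' : Connected L (mtF Nc L k') (bsF Nc L k) := h ▸ conn_self Nc L k'
  obtain ⟨hb, hg⟩ := analysis Nc L k k' h1 hc
  obtain ⟨_, hg'⟩ := analysis Nc L k' k h1 hc'
  exact eq_of_div_mod _ _ _ hb (by omega)

/-- rank function used to define the decoding order -/
def ulR (Nc L : ℕ) (p : ℕ × ℕ) : ℕ :=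
  if p.1 = p.2 then Nc - (p.2 - 1) % (2*Nc+L) else Nc + (p.2 - 1) % (2*Nc+L)

lemma rank_eval (Nc L k : ℕ) (h1 : 1 ≤ Nc) (hL : 0 < L) :
    ulR Nc L (mtF Nc L k, bsF Nc L k) =
      if k % (2*Nc) < Nc then Nc - k % (2*Nc) else Nc + k % (2*Nc) := by
  have hu : k % (2*Nc) < 2*Nc := Nat.mod_lt _ (by omega)
  have hmod : (bsF Nc L k - 1) % (2*Nc+L) = k % (2*Nc) := by
    unfold bsF
    rw [Nat.add_sub_cancel, Nat.mul_comm, Nat.mul_add_mod]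
    exact Nat.mod_eq_of_lt (by omega)
  show (if mtF Nc L k = bsF Nc L k then Nc - (bsF Nc L k - 1) % (2*Nc+L)
        else Nc + (bsF Nc L k - 1) % (2*Nc+L)) = _
  by_cases hA : k % (2*Nc) < Nc
  · have hmb : mtF Nc L k = bsF Nc L k := by unfold mtF; rw [if_pos hA, Nat.add_zero]
    rw [if_pos hmb, hmod, if_pos hA]
  · have hmb : mtF Nc L k ≠ bsF Nc L k := by unfold mtF; rw [if_neg hA]; omega
    rw [if_neg hmb, hmod, if_neg hA]

lemma key_lt (Nc L k k' : ℕ) (h1 : 1 ≤ Nc) (hL : 0 < L) (hne : k ≠ k')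
    (hc : Connected L (mtF Nc L k) (bsF Nc L k')) :
    ulR Nc L (mtF Nc L k, bsF Nc L k) < ulR Nc L (mtF Nc L k', bsF Nc L k') := by
  obtain ⟨hb, hg⟩ := analysis Nc L k k' h1 hc
  have hne' : k % (2*Nc) ≠ k' % (2*Nc) := fun h => hne (eq_of_div_mod _ _ _ hb h)
  rw [rank_eval Nc L k h1 hL, rank_eval Nc L k' h1 hL]
  rcases hg with ⟨h3, h4⟩ | ⟨h3, h4, h5⟩
  · rw [if_pos h3, if_pos (by omega)]; omega
  · rw [if_neg (by omega), if_neg (by omega)]; omega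
lemma mt_le (Nc L n k : ℕ) (h1 : 1 ≤ Nc) (hk : k < 2*Nc*n) :
    mtF Nc L k ≤ n * (2*Nc+L) := by
  have hu : k % (2*Nc) < 2*Nc := Nat.mod_lt _ (by omega)
  have hb : k / (2*Nc) + 1 ≤ n := by
    have := (Nat.div_lt_iff_lt_mul (show 0 < 2*Nc by omega)).2
      (show k < n * (2*Nc) from (Nat.mul_comm (2*Nc) n) ▸ hk)
    omega
  have hmul : (k / (2*Nc) + 1) * (2*Nc+L) ≤ n * (2*Nc+L) := Nat.mul_le_mul_right _ hb
  rw [add_one_mul] at hmul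
  unfold mtF bsF
  split_ifs <;> omega

lemma card_filter_le (Nc L n k : ℕ) (h1 : 1 ≤ Nc) :
    (((Finset.range (2*Nc*n)).image (bsF Nc L)).filter
      (fun j => mtF Nc L k - L ≤ j ∧ j ≤ mtF Nc L k)).card ≤ Nc := by
  have huu : k % (2*Nc) < 2*Nc := Nat.mod_lt _ (by omega)
  have hsub : (((Finset.range (2*Nc*n)).image (bsF Nc L)).filter
      (fun j => mtF Nc L k - L ≤ j ∧ j ≤ mtF Nc L k)) ⊆
      Finset.Icc
        (if k % (2*Nc) < Nc then k / (2*Nc) * (2*Nc+L) + 1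
          else k / (2*Nc) * (2*Nc+L) + k % (2*Nc) + 1)
        (if k % (2*Nc) < Nc then k / (2*Nc) * (2*Nc+L) + k % (2*Nc) + 1
          else k / (2*Nc) * (2*Nc+L) + 2*Nc) := by
    intro j hj
    simp only [Finset.mem_filter, Finset.mem_image, Finset.mem_range] at hj
    obtain ⟨⟨k', hk', rfl⟩, hj1, hj2⟩ := hj
    obtain ⟨hb, hg⟩ := analysis Nc L k k' h1 ⟨hj1, hj2⟩
    have hu' : k' % (2*Nc) < 2*Nc := Nat.mod_lt _ (by omega)
    have hbs : bsF Nc L k' = k / (2*Nc) * (2*Nc+L) + k' % (2*Nc) + 1 := by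
      rw [hb]; rfl
    rw [Finset.mem_Icc, hbs]
    rcases hg with ⟨h3, h4⟩ | ⟨h3, h4, h5⟩ <;> split_ifs <;> omega
  calc _ ≤ _ := Finset.card_le_card hsub
    _ ≤ Nc := by rw [Nat.card_Icc]; split_ifs <;> omega

/-- Achievability part of Theorem 1 for `1 ≤ Nc ≤ L/2 - 1`: there is a cell association
and an uplink zero-forcing scheme with at least `2·Nc·⌊K/(2Nc+L)⌋` decoding pairs. -/
theorem uplink_low_range_achievable (K L Nc : ℕ) (hK : 0 < K) (hL : 0 < L)
    (h1 : 1 ≤ Nc) (h2 : 2 * Nc ≤ L - 2) :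
    ∃ C : ℕ → Finset ℕ, IsCellAssoc K Nc C ∧
      ∃ S : UplinkScheme K L C, 2 * Nc * (K / (2 * Nc + L)) ≤ S.D.card := by
  classical
  set n := K / (2 * Nc + L) with hn
  set N := 2 * Nc * n with hN
  set f : ℕ → ℕ × ℕ := fun k => (mtF Nc L k, bsF Nc L k) with hf
  set C : ℕ → Finset ℕ := fun i =>
    if i ∈ (Finset.range N).image (mtF Nc L) then
      ((Finset.range N).image (bsF Nc L)).filter (fun j => i - L ≤ j ∧ j ≤ i)
    else ∅ with hC
  have hfinj : Function.Injective f := fun a b h => bsF_inj Nc L h1 (congrArg Prod.snd h)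
  have hmtK : ∀ k, k < N → mtF Nc L k ≤ K := by
    intro k hk
    refine le_trans (mt_le Nc L n k h1 (by omega)) ?_
    rw [hn]
    exact Nat.div_mul_le_self K (2 * Nc + L)
  have hbs1 : ∀ k, 1 ≤ bsF Nc L k := fun k => Nat.succ_le_succ (Nat.zero_le _)
  have hbsmt : ∀ k, bsF Nc L k ≤ mtF Nc L k := fun k => (conn_self Nc L k).2
  refine ⟨C, ?_, ?_⟩
  · intro i hi
    constructor
    · rw [hC]; dsimp only
      split_ifs with hact
      · intro j hj
        simp only [Finset.mem_filter, Finset.mem_image, Finset.mem_range] at hj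
        obtain ⟨⟨k, hk, rfl⟩, _, _⟩ := hj
        rw [Finset.mem_Icc]
        exact ⟨hbs1 k, le_trans (hbsmt k) (hmtK k hk)⟩
      · intro j hj
        exact absurd hj (Finset.notMem_empty j)
    · rw [hC]; dsimp only
      split_ifs with hact
      · simp only [Finset.mem_image, Finset.mem_range] at hact
        obtain ⟨k, hk, rfl⟩ := hact
        have := card_filter_le Nc L n k h1
        rw [← hN] at this
        exact this
      · simp
  · have hassoc : ∀ k, k < N → bsF Nc L k ∈ C (mtF Nc L k) := by
      intro k hk
      rw [hC]; dsimp only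
      rw [if_pos (Finset.mem_image_of_mem (mtF Nc L) (Finset.mem_range.2 hk))]
      exact Finset.mem_filter.2
        ⟨Finset.mem_image_of_mem (bsF Nc L) (Finset.mem_range.2 hk),
          (conn_self Nc L k).1, (conn_self Nc L k).2⟩
    refine ⟨⟨(Finset.range N).image f,
      fun p q => ulR Nc L p < ulR Nc L q ∨ (ulR Nc L p = ulR Nc L q ∧ p.1 < q.1),
      ?_, ?_, ?_, ?_, ?_, ?_, ?_, ?_⟩, ?_⟩
    · -- lt_irrefl
      intro p _ h
      rcases h with h | ⟨_, h⟩ <;> exact absurd h (lt_irrefl _)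
    · -- lt_trans
      intro p _ q _ r _ hpq hqr
      rcases hpq with h | ⟨h, h'⟩ <;> rcases hqr with g | ⟨g, g'⟩ <;> omega
    · -- lt_total
      intro p hp q hq hne
      simp only [Finset.mem_image, Finset.mem_range] at hp hq
      obtain ⟨k, hk, rfl⟩ := hp
      obtain ⟨k', hk', rfl⟩ := hq
      have hkk : k ≠ k' := fun h => hne (by rw [h])
      have hne1 : mtF Nc L k ≠ mtF Nc L k' := fun h => hkk (mtF_inj Nc L h1 h)
      have e1 : (f k).1 = mtF Nc L k := rfl
      have e2 : (f k').1 = mtF Nc L k' := rfl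
      rcases lt_trichotomy (ulR Nc L (f k)) (ulR Nc L (f k')) with h | h | h <;>
        rcases Nat.lt_or_ge (f k).1 (f k').1 with g | g <;> omega
    · -- mem_range
      intro p hp
      simp only [Finset.mem_image, Finset.mem_range] at hp
      obtain ⟨k, hk, rfl⟩ := hp
      constructor <;> rw [Finset.mem_Icc]
      · exact ⟨le_trans (hbs1 k) (hbsmt k), hmtK k hk⟩
      · exact ⟨hbs1 k, le_trans (hbsmt k) (hmtK k hk)⟩
    · -- assoc
      intro p hp
      simp only [Finset.mem_image, Finset.mem_range] at hp
      obtain ⟨k, hk, rfl⟩ := hp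
      exact hassoc k hk
    · -- conn
      intro p hp
      simp only [Finset.mem_image, Finset.mem_range] at hp
      obtain ⟨k, hk, rfl⟩ := hp
      exact conn_self Nc L k
    · -- distinct
      intro p hp q hq hne
      simp only [Finset.mem_image, Finset.mem_range] at hp hq
      obtain ⟨k, hk, rfl⟩ := hp
      obtain ⟨k', hk', rfl⟩ := hq
      have hkk : k ≠ k' := fun h => hne (by rw [h])
      exact ⟨fun h => hkk (mtF_inj Nc L h1 h), fun h => hkk (bsF_inj Nc L h1 h)⟩
    · -- zf
      intro p hp q hq hne1 hcon
      simp only [Finset.mem_image, Finset.mem_range] at hp hq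
      obtain ⟨k, hk, rfl⟩ := hp
      obtain ⟨k', hk', rfl⟩ := hq
      have hkk : k ≠ k' := fun h => hne1 (by rw [h])
      constructor
      · show bsF Nc L k' ∈ C (mtF Nc L k)
        rw [hC]; dsimp only
        rw [if_pos (Finset.mem_image_of_mem (mtF Nc L) (Finset.mem_range.2 hk))]
        exact Finset.mem_filter.2
          ⟨Finset.mem_image_of_mem (bsF Nc L) (Finset.mem_range.2 hk'),
            hcon.1, hcon.2⟩
      · exact Or.inl (key_lt Nc L k k' h1 hL hkk hcon)
    · -- cardinality
      rw [Finset.card_image_of_injective _ hfinj, Finset.card_range]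
end

section
/- Let N_c ≥ L + 1 and κ = ⌈(L+1)/2⌉ + N_c − (L+1). Then there exist a full coverage cell association C_1,…,C_K (i.e., {max(1, i−L),…,i} ⊆ C_i for all i) with |C_i| ≤ N_c for all i, and a combinatorial downlink zero-forcing scheme for it with at least 2κ·⌊K/(2κ+L)⌋ active receivers. (Achievability of downlink per-user DoF 2κ/(2κ+L) under full coverage associations, as in Theorems 2 and 3.) -/
/-- A full coverage cell association: each MT is associated with all BSs connected to it. -/
def FullCoverage (K L : ℕ) (C : ℕ → Finset ℕ) : Prop :=
  ∀ i ∈ Finset.Icc 1 K, Finset.Icc (max 1 (i - L)) i ⊆ C i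

/-- A combinatorial downlink zero-forcing scheme for the association `C`:
a set `A ⊆ {1,…,K}` of active receivers and, for each `i ∈ A`, a nonempty set
`T i ⊆ C i` of base stations actively transmitting `W i`, at least one of which is
connected to receiver `i`, such that there is a matching between `T i` and the set of
active receivers connected to at least one BS in `T i`, saturating those receivers. -/
structure DownlinkScheme (K L : ℕ) (C : ℕ → Finset ℕ) where
  A : Finset ℕ
  T : ℕ → Finset ℕ
  A_sub : A ⊆ Finset.Icc 1 K
  T_sub : ∀ i ∈ A, T i ⊆ C i
  T_nonempty : ∀ i ∈ A, (T i).Nonempty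
  T_conn : ∀ i ∈ A, ∃ j ∈ T i, Connected L i j
  matching : ∀ i ∈ A, ∃ f : ℕ → ℕ,
      (∀ r ∈ A, (∃ j ∈ T i, Connected L r j) → f r ∈ T i ∧ Connected L r (f r)) ∧
      (∀ r ∈ A, ∀ s ∈ A, (∃ j ∈ T i, Connected L r j) → (∃ j ∈ T i, Connected L s j) →
        f r = f s → r = s)

/-- Achievability of downlink per-user DoF `2κ/(2κ+L)` under full coverage associations
(`Nc ≥ L + 1`, `κ = ⌈(L+1)/2⌉ + Nc - (L+1)`). -/
theorem downlink_full_coverage_achievable (K L Nc : ℕ) (hK : 0 < K) (hL : 0 < L)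
    (hNc : L + 1 ≤ Nc) (kappa : ℕ) (hkappa : kappa = (L + 2) / 2 + Nc - (L + 1)) :
    ∃ C : ℕ → Finset ℕ, IsCellAssoc K Nc C ∧ FullCoverage K L C ∧
      ∃ S : DownlinkScheme K L C, 2 * kappa * (K / (2 * kappa + L)) ≤ S.A.card := by
  obtain ⟨e, he⟩ : ∃ e, Nc = L + 1 + e := ⟨Nc - (L + 1), by omega⟩
  obtain ⟨l1, l2, hl12, hle1, hle2⟩ : ∃ l1 l2, L = l1 + l2 ∧ l1 ≤ l2 ∧ l2 ≤ l1 + 1 :=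
    ⟨L / 2, L - L / 2, by omega, by omega, by omega⟩
  have hkap : kappa = l1 + 1 + e := by omega
  set P := 2 * kappa + L with hP
  have hPpos : 0 < P := by omega
  set B := K / P with hB
  have tri : ∀ a c : ℕ, a < c → a * P + P ≤ c * P := by
    intro a c hac
    calc a * P + P = (a + 1) * P := by ring
      _ ≤ c * P := Nat.mul_le_mul hac (le_refl P)
  have hBK : ∀ b, b < B → b * P + P ≤ K := by
    intro b hb
    have h2 : (b + 1) * P ≤ K := (Nat.le_div_iff_mul_le hPpos).mp hb
    calc b * P + P = (b + 1) * P := by ring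
      _ ≤ K := h2
  have hdec : ∀ b t, t < P → (t + P * b) / P = b ∧ (t + P * b) % P = t := by
    intro b t ht
    constructor
    · rw [Nat.add_mul_div_left _ _ hPpos, Nat.div_eq_of_lt ht, Nat.zero_add]
    · rw [Nat.add_mul_mod_self_left, Nat.mod_eq_of_lt ht]
  set A : Finset ℕ := (Finset.range B).biUnion (fun b =>
      Finset.Icc (b * P + l2 + 1) (b * P + l2 + kappa) ∪
      Finset.Icc (b * P + l2 + kappa + l1 + 1) (b * P + l2 + 2 * kappa + l1)) with hA
  set tlo : ℕ → ℕ := fun i => if (i - (l2 + 1)) % P < kappa then ((i - (l2 + 1)) / P) * P + 1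
      else ((i - (l2 + 1)) / P) * P + l2 + kappa + 1 with htlo
  set T : ℕ → Finset ℕ := fun i => Finset.Icc (tlo i) (tlo i + (kappa - 1)) with hT
  set C : ℕ → Finset ℕ := fun i => if i ∈ A then
      Finset.Icc (min (max 1 (i - L)) (tlo i)) (max i (tlo i + (kappa - 1)))
    else Finset.Icc (max 1 (i - L)) i with hC
  have memA : ∀ r, r ∈ A → ∃ b, b < B ∧
      ((b * P + l2 + 1 ≤ r ∧ r ≤ b * P + l2 + kappa) ∨
       (b * P + l2 + kappa + l1 + 1 ≤ r ∧ r ≤ b * P + l2 + 2 * kappa + l1)) := by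
    intro r hr
    rw [hA, Finset.mem_biUnion] at hr
    obtain ⟨b, hb, hrb⟩ := hr
    rw [Finset.mem_range] at hb
    rw [Finset.mem_union, Finset.mem_Icc, Finset.mem_Icc] at hrb
    exact ⟨b, hb, hrb⟩
  have tlo1 : ∀ b i, b * P + l2 + 1 ≤ i → i ≤ b * P + l2 + kappa → tlo i = b * P + 1 := by
    intro b i h1 h2
    have h1' : P * b + l2 + 1 ≤ i := by rw [Nat.mul_comm]; exact h1
    have h2' : i ≤ P * b + l2 + kappa := by rw [Nat.mul_comm P b]; exact h2
    obtain ⟨u, hu⟩ : ∃ u, u = P * b := ⟨_, rfl⟩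
    rw [← hu] at h1' h2'
    obtain ⟨t, ht, hit⟩ : ∃ t, t < kappa ∧ i - (l2 + 1) = t + u :=
      ⟨i - (l2 + 1) - u, by omega, by omega⟩
    rw [hu] at hit
    have hd := hdec b t (by omega)
    simp only [htlo, hit, hd.1, hd.2, if_pos ht]
  have tlo2 : ∀ b i, b * P + l2 + kappa + l1 + 1 ≤ i → i ≤ b * P + l2 + 2 * kappa + l1 →
      tlo i = b * P + l2 + kappa + 1 := by
    intro b i h1 h2
    have h1' : P * b + l2 + kappa + l1 + 1 ≤ i := by rw [Nat.mul_comm]; exact h1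
    have h2' : i ≤ P * b + l2 + 2 * kappa + l1 := by rw [Nat.mul_comm P b]; exact h2
    obtain ⟨u, hu⟩ : ∃ u, u = P * b := ⟨_, rfl⟩
    rw [← hu] at h1' h2'
    obtain ⟨t, ht1, ht2, hit⟩ : ∃ t, kappa ≤ t ∧ t < P ∧ i - (l2 + 1) = t + u :=
      ⟨i - (l2 + 1) - u, by omega, by omega, by omega⟩
    rw [hu] at hit
    have hd := hdec b t ht2
    simp only [htlo, hit, hd.1, hd.2, if_neg (by omega : ¬ t < kappa)]
  have sep : ∀ u v r : ℕ, (u = v ∨ u + P ≤ v ∨ v + P ≤ u) →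
      ((v + l2 + 1 ≤ r ∧ r ≤ v + l2 + kappa) ∨
       (v + l2 + kappa + l1 + 1 ≤ r ∧ r ≤ v + l2 + 2 * kappa + l1)) →
      ((u + 1 ≤ r ∧ r ≤ u + kappa + L) → (u + l2 + 1 ≤ r ∧ r ≤ u + l2 + kappa)) ∧
      ((u + l2 + kappa + 1 ≤ r ∧ r ≤ u + l2 + 2 * kappa + L) →
        (u + l2 + kappa + l1 + 1 ≤ r ∧ r ≤ u + l2 + 2 * kappa + l1)) := by
    intro u v r huv hr
    constructor <;> intro hb <;> omega
  have hCA : IsCellAssoc K Nc C := by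
    intro i hi
    rw [Finset.mem_Icc] at hi
    by_cases hiA : i ∈ A
    · obtain ⟨b, hbB, hcase⟩ := memA i hiA
      have hbK := hBK b hbB
      simp only [hC, if_pos hiA]
      rcases hcase with h | h
      · rw [tlo1 b i h.1 h.2]
        obtain ⟨u, hu⟩ : ∃ u, u = b * P := ⟨_, rfl⟩
        rw [← hu] at h hbK ⊢
        constructor
        · intro x hx; rw [Finset.mem_Icc] at hx ⊢; omega
        · rw [Nat.card_Icc]; omega
      · rw [tlo2 b i h.1 h.2]
        obtain ⟨u, hu⟩ : ∃ u, u = b * P := ⟨_, rfl⟩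
        rw [← hu] at h hbK ⊢
        constructor
        · intro x hx; rw [Finset.mem_Icc] at hx ⊢; omega
        · rw [Nat.card_Icc]; omega
    · simp only [hC, if_neg hiA]
      constructor
      · intro x hx; rw [Finset.mem_Icc] at hx ⊢; omega
      · rw [Nat.card_Icc]; omega
  have hFC : FullCoverage K L C := by
    intro i _
    simp only [hC]
    split
    · exact Finset.Icc_subset_Icc (min_le_left _ _) (le_max_left _ _)
    · exact subset_rfl
  refine ⟨C, hCA, hFC, ⟨A, T, ?_, ?_, ?_, ?_, ?_⟩, ?_⟩
  · -- A_sub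
    intro r hr
    obtain ⟨b, hbB, hcase⟩ := memA r hr
    have hbK := hBK b hbB
    obtain ⟨u, hu⟩ : ∃ u, u = b * P := ⟨_, rfl⟩
    rw [← hu] at hcase hbK
    rw [Finset.mem_Icc]
    omega
  · -- T_sub
    intro i hiA
    simp only [hT, hC, if_pos hiA]
    exact Finset.Icc_subset_Icc (min_le_right _ _) (le_max_right _ _)
  · -- T_nonempty
    intro i _
    simp only [hT]
    rw [Finset.nonempty_Icc]
    exact Nat.le_add_right _ _
  · -- T_conn
    intro i hiA
    obtain ⟨b, hbB, hcase⟩ := memA i hiA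
    rcases hcase with h | h
    · have hTi : T i = Finset.Icc (b * P + 1) (b * P + 1 + (kappa - 1)) := by
        simp only [hT]; rw [tlo1 b i h.1 h.2]
      rw [hTi]
      obtain ⟨u, hu⟩ : ∃ u, u = b * P := ⟨_, rfl⟩
      rw [← hu] at h ⊢
      exact ⟨i - l2, by rw [Finset.mem_Icc]; omega, ⟨by omega, by omega⟩⟩
    · have hTi : T i = Finset.Icc (b * P + l2 + kappa + 1) (b * P + l2 + kappa + 1 + (kappa - 1)) := by
        simp only [hT]; rw [tlo2 b i h.1 h.2]
      rw [hTi]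
      obtain ⟨u, hu⟩ : ∃ u, u = b * P := ⟨_, rfl⟩
      rw [← hu] at h ⊢
      exact ⟨i - l1, by rw [Finset.mem_Icc]; omega, ⟨by omega, by omega⟩⟩
  · -- matching
    intro i hiA
    obtain ⟨b, hbB, hcase⟩ := memA i hiA
    rcases hcase with h | h
    · have hTi : T i = Finset.Icc (b * P + 1) (b * P + 1 + (kappa - 1)) := by
        simp only [hT]; rw [tlo1 b i h.1 h.2]
      obtain ⟨u, hu⟩ : ∃ u, u = b * P := ⟨_, rfl⟩
      rw [← hu] at hTi h
      have hcov : ∀ r, r ∈ A → (∃ j ∈ T i, Connected L r j) →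
          u + l2 + 1 ≤ r ∧ r ≤ u + l2 + kappa := by
        intro r hrA hex
        obtain ⟨j, hjT, hconn⟩ := hex
        rw [hTi, Finset.mem_Icc] at hjT
        have hc1 : r - L ≤ j := hconn.1
        have hc2 : j ≤ r := hconn.2
        obtain ⟨b', hb'B, hcase'⟩ := memA r hrA
        obtain ⟨v, hv⟩ : ∃ v, v = b' * P := ⟨_, rfl⟩
        rw [← hv] at hcase'
        have hsep : u = v ∨ u + P ≤ v ∨ v + P ≤ u := by
          rcases Nat.lt_trichotomy b b' with hlt | heq | hgt
          · right; left; rw [hu, hv]; exact tri b b' hlt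
          · left; rw [hu, hv, heq]
          · right; right; rw [hu, hv]; exact tri b' b hgt
        exact (sep u v r hsep hcase').1 ⟨by omega, by omega⟩
      refine ⟨fun r => r - l2, ?_, ?_⟩
      · intro r hrA hex
        have hr := hcov r hrA hex
        constructor
        · show r - l2 ∈ T i
          rw [hTi, Finset.mem_Icc]
          omega
        · show r - L ≤ r - l2 ∧ r - l2 ≤ r
          omega
      · intro r hrA s hsA hexr hexs heq
        have h1 := hcov r hrA hexr
        have h2 := hcov s hsA hexs
        have heq' : r - l2 = s - l2 := heq
        omega
    · have hTi : T i = Finset.Icc (b * P + l2 + kappa + 1) (b * P + l2 + kappa + 1 + (kappa - 1)) := by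
        simp only [hT]; rw [tlo2 b i h.1 h.2]
      obtain ⟨u, hu⟩ : ∃ u, u = b * P := ⟨_, rfl⟩
      rw [← hu] at hTi h
      have hcov : ∀ r, r ∈ A → (∃ j ∈ T i, Connected L r j) →
          u + l2 + kappa + l1 + 1 ≤ r ∧ r ≤ u + l2 + 2 * kappa + l1 := by
        intro r hrA hex
        obtain ⟨j, hjT, hconn⟩ := hex
        rw [hTi, Finset.mem_Icc] at hjT
        have hc1 : r - L ≤ j := hconn.1
        have hc2 : j ≤ r := hconn.2
        obtain ⟨b', hb'B, hcase'⟩ := memA r hrA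
        obtain ⟨v, hv⟩ : ∃ v, v = b' * P := ⟨_, rfl⟩
        rw [← hv] at hcase'
        have hsep : u = v ∨ u + P ≤ v ∨ v + P ≤ u := by
          rcases Nat.lt_trichotomy b b' with hlt | heq | hgt
          · right; left; rw [hu, hv]; exact tri b b' hlt
          · left; rw [hu, hv, heq]
          · right; right; rw [hu, hv]; exact tri b' b hgt
        exact (sep u v r hsep hcase').2 ⟨by omega, by omega⟩
      refine ⟨fun r => r - l1, ?_, ?_⟩
      · intro r hrA hex
        have hr := hcov r hrA hex
        constructor
        · show r - l1 ∈ T i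
          rw [hTi, Finset.mem_Icc]
          omega
        · show r - L ≤ r - l1 ∧ r - l1 ≤ r
          omega
      · intro r hrA s hsA hexr hexs heq
        have h1 := hcov r hrA hexr
        have h2 := hcov s hsA hexs
        have heq' : r - l1 = s - l1 := heq
        omega
  · -- cardinality
    have blkdisj : ∀ u v : ℕ, (u + P ≤ v ∨ v + P ≤ u) →
        Disjoint (Finset.Icc (u + l2 + 1) (u + l2 + kappa) ∪
            Finset.Icc (u + l2 + kappa + l1 + 1) (u + l2 + 2 * kappa + l1))
          (Finset.Icc (v + l2 + 1) (v + l2 + kappa) ∪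
            Finset.Icc (v + l2 + kappa + l1 + 1) (v + l2 + 2 * kappa + l1)) := by
      intro u v huv
      rw [Finset.disjoint_left]
      intro a ha hb
      rw [Finset.mem_union, Finset.mem_Icc, Finset.mem_Icc] at ha hb
      omega
    have blkcard : ∀ u : ℕ, (Finset.Icc (u + l2 + 1) (u + l2 + kappa) ∪
        Finset.Icc (u + l2 + kappa + l1 + 1) (u + l2 + 2 * kappa + l1)).card = 2 * kappa := by
      intro u
      rw [Finset.card_union_of_disjoint (by
        rw [Finset.disjoint_left]
        intro a ha hb
        rw [Finset.mem_Icc] at ha hb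
        omega)]
      rw [Nat.card_Icc, Nat.card_Icc]
      omega
    have hcard : A.card = B * (2 * kappa) := by
      rw [hA, Finset.card_biUnion (by
        intro a _ c _ hac
        refine blkdisj (a * P) (c * P) ?_
        rcases Nat.lt_trichotomy a c with hlt | heq | hgt
        · exact Or.inl (tri a c hlt)
        · exact absurd heq hac
        · exact Or.inr (tri c a hgt))]
      rw [Finset.sum_congr rfl (fun b _ => blkcard (b * P))]
      rw [Finset.sum_const, Finset.card_range, smul_eq_mul]
    exact le_of_eq (by rw [hcard]; ring)
end

section
/- If 1 ≤ N_c ≤ L, then there exists a single cell association C_1,…,C_K with |C_i| ≤ N_c for all i that simultaneously admits a combinatorial uplink zero-forcing scheme with at least 2·N_c·⌊K/(2N_c + L)⌋ decoding pairs and a combinatorial downlink zero-forcing scheme with at least 2·N_c·⌊K/(2N_c + L)⌋ active receivers. (Inner bound of Theorem 2 for 1 ≤ N_c ≤ L: the average uplink-downlink zero-forcing per-user DoF is at least 2N_c/(2N_c + L) with a shared association.) -/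
namespace JLR

/-- offset of the block containing `i` (1-indexed users, blocks of size `B`). -/
def off (B i : ℕ) : ℕ := (i - 1) / B * B

def S1 (B Nc n : ℕ) : Finset ℕ :=
  (Finset.range n ×ˢ Finset.range Nc).image (fun p => p.1 * B + p.2 + 1)

def S2 (B Nc L n : ℕ) : Finset ℕ :=
  (Finset.range n ×ˢ Finset.range Nc).image (fun p => p.1 * B + Nc + L + p.2 + 1)

lemma mul_tri (B b b' : ℕ) : b = b' ∨ b * B + B ≤ b' * B ∨ b' * B + B ≤ b * B := by
  rcases Nat.lt_trichotomy b b' with h | h | h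
  · right; left
    have h2 : (b + 1) * B ≤ b' * B := Nat.mul_le_mul_right _ h
    rw [add_one_mul] at h2; omega
  · exact Or.inl h
  · right; right
    have h2 : (b' + 1) * B ≤ b * B := Nat.mul_le_mul_right _ h
    rw [add_one_mul] at h2; omega

lemma off_eq (B : ℕ) (hB : 0 < B) (b t : ℕ) (ht : t < B) : off B (b * B + t + 1) = b * B := by
  have h1 : (b * B + t) / B = b := by
    rw [mul_comm, Nat.mul_add_div hB, Nat.div_eq_of_lt ht, add_zero]
  simp [off, h1]

lemma off_tri (B : ℕ) (i j : ℕ) :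
    off B i = off B j ∨ off B i + B ≤ off B j ∨ off B j + B ≤ off B i := by
  rcases mul_tri B ((i - 1) / B) ((j - 1) / B) with h | h | h
  · left; simp [off, h]
  · right; left; exact h
  · right; right; exact h

lemma S1_rep {B Nc n i : ℕ} (hB : 0 < B) (hNcB : Nc ≤ B) (hi : i ∈ S1 B Nc n) :
    ∃ k, k < Nc ∧ i = off B i + k + 1 ∧ off B i + B ≤ n * B := by
  simp only [S1, Finset.mem_image, Finset.mem_product, Finset.mem_range] at hi
  obtain ⟨⟨b, k⟩, ⟨hb, hk⟩, rfl⟩ := hi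
  dsimp only
  have ho := off_eq B hB b k (by omega)
  have hnn : (b + 1) * B ≤ n * B := Nat.mul_le_mul_right _ hb
  rw [add_one_mul] at hnn
  exact ⟨k, hk, by omega, by omega⟩

lemma S2_rep {B Nc L n i : ℕ} (hB : 0 < B) (hNcB : Nc + L + Nc ≤ B) (hi : i ∈ S2 B Nc L n) :
    ∃ k, k < Nc ∧ i = off B i + Nc + L + k + 1 ∧ off B i + B ≤ n * B := by
  simp only [S2, Finset.mem_image, Finset.mem_product, Finset.mem_range] at hi
  obtain ⟨⟨b, k⟩, ⟨hb, hk⟩, rfl⟩ := hi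
  dsimp only
  have ho : off B (b * B + (Nc + L + k) + 1) = b * B := off_eq B hB b (Nc + L + k) (by omega)
  have he : b * B + Nc + L + k + 1 = b * B + (Nc + L + k) + 1 := by omega
  rw [he]
  have hnn : (b + 1) * B ≤ n * B := Nat.mul_le_mul_right _ hb
  rw [add_one_mul] at hnn
  exact ⟨k, hk, by omega, by omega⟩

lemma not_S1_of_S2 {B Nc L n i : ℕ} (hB : 0 < B) (hNcB : Nc + L + Nc ≤ B) (hL : 0 < L)
    (hi : i ∈ S2 B Nc L n) : i ∉ S1 B Nc n := by
  intro h1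
  obtain ⟨k, hk, he, _⟩ := S1_rep hB (by omega) h1
  obtain ⟨k', hk', he', _⟩ := S2_rep hB hNcB hi
  omega

lemma S1_card {B Nc n : ℕ} (hB : 0 < B) (hNcB : Nc ≤ B) : (S1 B Nc n).card = n * Nc := by
  rw [S1, Finset.card_image_of_injOn, Finset.card_product, Finset.card_range, Finset.card_range]
  rintro ⟨b, k⟩ hp ⟨b', k'⟩ hq h
  simp only [Finset.coe_product, Set.mem_prod, Finset.mem_coe, Finset.mem_range] at hp hq
  have h' : b * B + k + 1 = b' * B + k' + 1 := h
  rcases mul_tri B b b' with hh | hh | hh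
  · subst hh
    have hkk : k = k' := by omega
    rw [hkk]
  · omega
  · omega

lemma S2_card {B Nc L n : ℕ} (hB : 0 < B) (hNcB : Nc + L + Nc ≤ B) :
    (S2 B Nc L n).card = n * Nc := by
  rw [S2, Finset.card_image_of_injOn, Finset.card_product, Finset.card_range, Finset.card_range]
  rintro ⟨b, k⟩ hp ⟨b', k'⟩ hq h
  simp only [Finset.coe_product, Set.mem_prod, Finset.mem_coe, Finset.mem_range] at hp hq
  have h' : b * B + Nc + L + k + 1 = b' * B + Nc + L + k' + 1 := h
  rcases mul_tri B b b' with hh | hh | hh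
  · subst hh
    have hkk : k = k' := by omega
    rw [hkk]
  · omega
  · omega

end JLR

namespace JLR

def Cfun (B Nc L n : ℕ) : ℕ → Finset ℕ := fun i =>
  if i ∈ S1 B Nc n then Finset.Icc (off B i + 1) (off B i + Nc)
  else if i ∈ S2 B Nc L n then Finset.Icc (off B i + Nc + 1) (off B i + 2 * Nc)
  else ∅

def Tfun (B Nc L n : ℕ) : ℕ → Finset ℕ := fun i =>
  if i ∈ S1 B Nc n then Finset.Icc i (off B i + Nc)
  else Finset.Icc (off B i + Nc + 1) (i - L)

def Dset (B Nc L n : ℕ) : Finset (ℕ × ℕ) :=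
  (S1 B Nc n).image (fun i => (i, i)) ∪ (S2 B Nc L n).image (fun i => (i, i - L))

def F (K : ℕ) (p : ℕ × ℕ) : ℕ := if p.2 = p.1 then 2 * K + 1 - p.1 else p.1

lemma F_eq_G1 {K : ℕ} {p : ℕ × ℕ} (h : p.2 = p.1) : F K p = 2 * K + 1 - p.1 := if_pos h

lemma F_eq_G2 {K : ℕ} {p : ℕ × ℕ} (h : ¬ p.2 = p.1) : F K p = p.1 := if_neg h

lemma mem_Dset {B Nc L n : ℕ} {p : ℕ × ℕ} :
    p ∈ Dset B Nc L n ↔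
      (p.1 ∈ S1 B Nc n ∧ p.2 = p.1) ∨ (p.1 ∈ S2 B Nc L n ∧ p.2 = p.1 - L) := by
  simp only [Dset, Finset.mem_union, Finset.mem_image]
  constructor
  · rintro (⟨i, hi, rfl⟩ | ⟨i, hi, rfl⟩)
    · exact Or.inl ⟨hi, rfl⟩
    · exact Or.inr ⟨hi, rfl⟩
  · rintro (⟨hi, h2⟩ | ⟨hi, h2⟩)
    · exact Or.inl ⟨p.1, hi, Prod.ext_iff.mpr ⟨rfl, h2.symm⟩⟩
    · exact Or.inr ⟨p.1, hi, Prod.ext_iff.mpr ⟨rfl, h2.symm⟩⟩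

lemma Dset_eq_of_fst {B Nc L n : ℕ} (hB : 0 < B) (hNcB : Nc + L + Nc ≤ B) (hL : 0 < L)
    {p q : ℕ × ℕ} (hp : p ∈ Dset B Nc L n) (hq : q ∈ Dset B Nc L n) (h : p.1 = q.1) :
    p = q := by
  rcases mem_Dset.1 hp with ⟨hpS, hp2⟩ | ⟨hpS, hp2⟩ <;>
    rcases mem_Dset.1 hq with ⟨hqS, hq2⟩ | ⟨hqS, hq2⟩
  · exact Prod.ext_iff.mpr ⟨h, by rw [hp2, hq2, h]⟩
  · exact absurd hpS (by rw [h]; exact not_S1_of_S2 hB hNcB hL hqS)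
  · exact absurd hqS (by rw [← h]; exact not_S1_of_S2 hB hNcB hL hpS)
  · exact Prod.ext_iff.mpr ⟨h, by rw [hp2, hq2, h]⟩

lemma Dset_card {B Nc L n : ℕ} (hB : 0 < B) (hNcB : Nc + L + Nc ≤ B) (hL : 0 < L) :
    (Dset B Nc L n).card = n * Nc + n * Nc := by
  have hinj1 : Function.Injective (fun i : ℕ => (i, i)) := by
    intro a b hab
    exact congrArg Prod.fst hab
  have hinj2 : Function.Injective (fun i : ℕ => (i, i - L)) := by
    intro a b hab
    exact congrArg Prod.fst hab
  have hdisj : Disjoint ((S1 B Nc n).image (fun i => (i, i)))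
      ((S2 B Nc L n).image (fun i => (i, i - L))) := by
    rw [Finset.disjoint_left]
    rintro a ha hb
    simp only [Finset.mem_image] at ha hb
    obtain ⟨i, hi, rfl⟩ := ha
    obtain ⟨i', hi', he⟩ := hb
    obtain ⟨k', hk', he', _⟩ := S2_rep hB hNcB hi'
    have h1 : i' = i := congrArg Prod.fst he
    have h2 : i' - L = i := congrArg Prod.snd he
    omega
  rw [Dset, Finset.card_union_of_disjoint hdisj,
    Finset.card_image_of_injective _ hinj1, Finset.card_image_of_injective _ hinj2,
    S1_card hB (by omega), S2_card hB hNcB]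

end JLR

open JLR

/-- Inner bound of Theorem 2 for `1 ≤ Nc ≤ L`: a single shared cell association
simultaneously admits an uplink zero-forcing scheme with at least
`2Nc·⌊K/(2Nc+L)⌋` decoding pairs and a downlink zero-forcing scheme with at least
`2Nc·⌊K/(2Nc+L)⌋` active receivers. -/

theorem joint_low_range_achievable (K L Nc : ℕ) (hK : 0 < K) (hL : 0 < L)
    (h1 : 1 ≤ Nc) (h2 : Nc ≤ L) :
    ∃ C : ℕ → Finset ℕ, IsCellAssoc K Nc C ∧
      (∃ S : UplinkScheme K L C, 2 * Nc * (K / (2 * Nc + L)) ≤ S.D.card) ∧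
      (∃ T : DownlinkScheme K L C, 2 * Nc * (K / (2 * Nc + L)) ≤ T.A.card) := by
  classical
  set B := 2 * Nc + L with hBdef
  set n := K / B with hndef
  have hB : 0 < B := by omega
  have hNLB : Nc + L + Nc ≤ B := by omega
  have hnB : n * B ≤ K := Nat.div_mul_le_self K B
  refine ⟨Cfun B Nc L n, ?_, ⟨⟨Dset B Nc L n, fun p q => F K p < F K q,
    ?_, ?_, ?_, ?_, ?_, ?_, ?_, ?_⟩, ?_⟩,
    ⟨⟨S1 B Nc n ∪ S2 B Nc L n, Tfun B Nc L n, ?_, ?_, ?_, ?_, ?_⟩, ?_⟩⟩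
  · -- IsCellAssoc
    intro i hi
    by_cases hs1 : i ∈ S1 B Nc n
    · obtain ⟨k, hk, he, hbd⟩ := S1_rep hB (by omega) hs1
      simp only [Cfun, if_pos hs1]
      constructor
      · intro x hx
        rw [Finset.mem_Icc] at hx ⊢
        omega
      · rw [Nat.card_Icc]; omega
    · by_cases hs2 : i ∈ S2 B Nc L n
      · obtain ⟨k, hk, he, hbd⟩ := S2_rep hB hNLB hs2
        simp only [Cfun, if_neg hs1, if_pos hs2]
        constructor
        · intro x hx
          rw [Finset.mem_Icc] at hx ⊢
          omega
        · rw [Nat.card_Icc]; omega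
      · simp [Cfun, hs1, hs2]
  · -- lt_irrefl
    intro p _
    exact Nat.lt_irrefl _
  · -- lt_trans
    intro p _ q _ r _ hpq hqr
    exact Nat.lt_trans hpq hqr
  · -- lt_total
    intro p hp q hq hne
    have hfst : p.1 ≠ q.1 := fun h => hne (Dset_eq_of_fst hB hNLB hL hp hq h)
    have hFne : F K p ≠ F K q := by
      rcases mem_Dset.1 hp with ⟨hpS, hp2⟩ | ⟨hpS, hp2⟩ <;>
        rcases mem_Dset.1 hq with ⟨hqS, hq2⟩ | ⟨hqS, hq2⟩
      · obtain ⟨k, hk, he, hbd⟩ := S1_rep hB (by omega) hpS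
        obtain ⟨k', hk', he', hbd'⟩ := S1_rep hB (by omega) hqS
        rw [F_eq_G1 hp2, F_eq_G1 hq2]; omega
      · obtain ⟨k, hk, he, hbd⟩ := S1_rep hB (by omega) hpS
        obtain ⟨k', hk', he', hbd'⟩ := S2_rep hB hNLB hqS
        rw [F_eq_G1 hp2, F_eq_G2 (show ¬ q.2 = q.1 by omega)]; omega
      · obtain ⟨k, hk, he, hbd⟩ := S2_rep hB hNLB hpS
        obtain ⟨k', hk', he', hbd'⟩ := S1_rep hB (by omega) hqS
        rw [F_eq_G2 (show ¬ p.2 = p.1 by omega), F_eq_G1 hq2]; omega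
      · obtain ⟨k, hk, he, hbd⟩ := S2_rep hB hNLB hpS
        obtain ⟨k', hk', he', hbd'⟩ := S2_rep hB hNLB hqS
        rw [F_eq_G2 (show ¬ p.2 = p.1 by omega), F_eq_G2 (show ¬ q.2 = q.1 by omega)]; omega
    rcases Nat.lt_or_ge (F K p) (F K q) with hlt | hge
    · exact Or.inl hlt
    · exact Or.inr (by omega)
  · -- mem_range
    intro p hp
    rcases mem_Dset.1 hp with ⟨hpS, hp2⟩ | ⟨hpS, hp2⟩
    · obtain ⟨k, hk, he, hbd⟩ := S1_rep hB (by omega) hpS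
      rw [Finset.mem_Icc, Finset.mem_Icc]
      omega
    · obtain ⟨k, hk, he, hbd⟩ := S2_rep hB hNLB hpS
      rw [Finset.mem_Icc, Finset.mem_Icc]
      omega
  · -- assoc
    intro p hp
    rcases mem_Dset.1 hp with ⟨hpS, hp2⟩ | ⟨hpS, hp2⟩
    · obtain ⟨k, hk, he, hbd⟩ := S1_rep hB (by omega) hpS
      simp only [Cfun, if_pos hpS, Finset.mem_Icc]
      omega
    · obtain ⟨k, hk, he, hbd⟩ := S2_rep hB hNLB hpS
      simp only [Cfun, if_neg (not_S1_of_S2 hB hNLB hL hpS), if_pos hpS, Finset.mem_Icc]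
      omega
  · -- conn
    intro p hp
    rcases mem_Dset.1 hp with ⟨hpS, hp2⟩ | ⟨hpS, hp2⟩
    · exact ⟨by omega, by omega⟩
    · obtain ⟨k, hk, he, hbd⟩ := S2_rep hB hNLB hpS
      exact ⟨by omega, by omega⟩
  · -- distinct
    intro p hp q hq hne
    have hfst : p.1 ≠ q.1 := fun h => hne (Dset_eq_of_fst hB hNLB hL hp hq h)
    refine ⟨hfst, ?_⟩
    rcases mem_Dset.1 hp with ⟨hpS, hp2⟩ | ⟨hpS, hp2⟩ <;>
      rcases mem_Dset.1 hq with ⟨hqS, hq2⟩ | ⟨hqS, hq2⟩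
    · omega
    · obtain ⟨k, hk, he, hbd⟩ := S1_rep hB (by omega) hpS
      obtain ⟨k', hk', he', hbd'⟩ := S2_rep hB hNLB hqS
      rcases off_tri B p.1 q.1 with h | h | h <;> omega
    · obtain ⟨k, hk, he, hbd⟩ := S2_rep hB hNLB hpS
      obtain ⟨k', hk', he', hbd'⟩ := S1_rep hB (by omega) hqS
      rcases off_tri B p.1 q.1 with h | h | h <;> omega
    · obtain ⟨k, hk, he, hbd⟩ := S2_rep hB hNLB hpS
      obtain ⟨k', hk', he', hbd'⟩ := S2_rep hB hNLB hqS
      omega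
  · -- zf
    intro p hp q hq hne hc
    obtain ⟨hc1, hc2⟩ := hc
    rcases mem_Dset.1 hp with ⟨hpS, hp2⟩ | ⟨hpS, hp2⟩ <;>
      rcases mem_Dset.1 hq with ⟨hqS, hq2⟩ | ⟨hqS, hq2⟩
    · -- G1 G1
      obtain ⟨k, hk, he, hbd⟩ := S1_rep hB (by omega) hpS
      obtain ⟨k', hk', he', hbd'⟩ := S1_rep hB (by omega) hqS
      rcases off_tri B p.1 q.1 with h | h | h
      · constructor
        · simp only [Cfun, if_pos hpS, Finset.mem_Icc]
          omega
        · show F K p < F K q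
          rw [F_eq_G1 hp2, F_eq_G1 hq2]
          omega
      · (exfalso; omega)
      · (exfalso; omega)
    · -- G1 G2 : impossible interference
      obtain ⟨k, hk, he, hbd⟩ := S1_rep hB (by omega) hpS
      obtain ⟨k', hk', he', hbd'⟩ := S2_rep hB hNLB hqS
      rcases off_tri B p.1 q.1 with h | h | h <;> (exfalso; omega)
    · -- G2 G1 : impossible interference
      obtain ⟨k, hk, he, hbd⟩ := S2_rep hB hNLB hpS
      obtain ⟨k', hk', he', hbd'⟩ := S1_rep hB (by omega) hqS
      rcases off_tri B p.1 q.1 with h | h | h <;> (exfalso; omega)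
    · -- G2 G2
      obtain ⟨k, hk, he, hbd⟩ := S2_rep hB hNLB hpS
      obtain ⟨k', hk', he', hbd'⟩ := S2_rep hB hNLB hqS
      rcases off_tri B p.1 q.1 with h | h | h
      · constructor
        · simp only [Cfun, if_neg (not_S1_of_S2 hB hNLB hL hpS), if_pos hpS, Finset.mem_Icc]
          omega
        · show F K p < F K q
          rw [F_eq_G2 (show ¬ p.2 = p.1 by omega), F_eq_G2 (show ¬ q.2 = q.1 by omega)]
          omega
      · (exfalso; omega)
      · (exfalso; omega)
  · -- uplink cardinality
    show 2 * Nc * n ≤ (Dset B Nc L n).card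
    rw [Dset_card hB hNLB hL]
    have : 2 * Nc * n = n * Nc + n * Nc := by ring
    omega
  · -- A_sub
    intro i hi
    rw [Finset.mem_Icc]
    rcases Finset.mem_union.1 hi with hs | hs
    · obtain ⟨k, hk, he, hbd⟩ := S1_rep hB (by omega) hs
      omega
    · obtain ⟨k, hk, he, hbd⟩ := S2_rep hB hNLB hs
      omega
  · -- T_sub
    intro i hi
    rcases Finset.mem_union.1 hi with hs | hs
    · obtain ⟨k, hk, he, hbd⟩ := S1_rep hB (by omega) hs
      simp only [Tfun, Cfun, if_pos hs]
      intro x hx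
      rw [Finset.mem_Icc] at hx ⊢
      omega
    · have hn1 := not_S1_of_S2 hB hNLB hL hs
      obtain ⟨k, hk, he, hbd⟩ := S2_rep hB hNLB hs
      simp only [Tfun, Cfun, if_neg hn1, if_pos hs]
      intro x hx
      rw [Finset.mem_Icc] at hx ⊢
      omega
  · -- T_nonempty
    intro i hi
    rcases Finset.mem_union.1 hi with hs | hs
    · obtain ⟨k, hk, he, hbd⟩ := S1_rep hB (by omega) hs
      simp only [Tfun, if_pos hs]
      rw [Finset.nonempty_Icc]
      omega
    · have hn1 := not_S1_of_S2 hB hNLB hL hs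
      obtain ⟨k, hk, he, hbd⟩ := S2_rep hB hNLB hs
      simp only [Tfun, if_neg hn1]
      rw [Finset.nonempty_Icc]
      omega
  · -- T_conn
    intro i hi
    rcases Finset.mem_union.1 hi with hs | hs
    · obtain ⟨k, hk, he, hbd⟩ := S1_rep hB (by omega) hs
      refine ⟨i, ?_, by omega, le_rfl⟩
      simp only [Tfun, if_pos hs, Finset.mem_Icc]
      omega
    · have hn1 := not_S1_of_S2 hB hNLB hL hs
      obtain ⟨k, hk, he, hbd⟩ := S2_rep hB hNLB hs
      refine ⟨i - L, ?_, by omega, by omega⟩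
      simp only [Tfun, if_neg hn1, Finset.mem_Icc]
      omega
  · -- matching
    intro i hi
    rcases Finset.mem_union.1 hi with hs | hs
    · -- i ∈ S1 : identity matching
      obtain ⟨k, hk, he, hbd⟩ := S1_rep hB (by omega) hs
      have key : ∀ r ∈ S1 B Nc n ∪ S2 B Nc L n,
          (∃ j ∈ Tfun B Nc L n i, Connected L r j) → i ≤ r ∧ r ≤ off B i + Nc := by
        rintro r hr ⟨j, hj, hcj⟩
        simp only [Tfun, if_pos hs, Finset.mem_Icc] at hj
        obtain ⟨hc1, hc2⟩ := hcj
        rcases Finset.mem_union.1 hr with hr1 | hr2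
        · obtain ⟨k', hk', he', hbd'⟩ := S1_rep hB (by omega) hr1
          rcases off_tri B i r with h | h | h <;> omega
        · obtain ⟨k', hk', he', hbd'⟩ := S2_rep hB hNLB hr2
          rcases off_tri B i r with h | h | h <;> omega
      refine ⟨fun r => r, ?_, ?_⟩
      · intro r hr hw
        obtain ⟨h1', h2'⟩ := key r hr hw
        simp only [Tfun, if_pos hs, Finset.mem_Icc]
        exact ⟨⟨h1', h2'⟩, by omega, le_rfl⟩
      · intro r _ s _ _ _ hf
        exact hf
    · -- i ∈ S2 : shift matching
      have hn1 := not_S1_of_S2 hB hNLB hL hs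
      obtain ⟨m, hm, he, hbd⟩ := S2_rep hB hNLB hs
      have key : ∀ r ∈ S1 B Nc n ∪ S2 B Nc L n,
          (∃ j ∈ Tfun B Nc L n i, Connected L r j) →
          r ≤ i ∧ ∃ kr, kr < Nc ∧ r = off B i + Nc + L + kr + 1 := by
        rintro r hr ⟨j, hj, hcj⟩
        simp only [Tfun, if_neg hn1, Finset.mem_Icc] at hj
        obtain ⟨hc1, hc2⟩ := hcj
        rcases Finset.mem_union.1 hr with hr1 | hr2
        · obtain ⟨k', hk', he', hbd'⟩ := S1_rep hB (by omega) hr1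
          rcases off_tri B i r with h | h | h <;> (exfalso; omega)
        · obtain ⟨k', hk', he', hbd'⟩ := S2_rep hB hNLB hr2
          rcases off_tri B i r with h | h | h
          · exact ⟨by omega, k', hk', by omega⟩
          · exfalso; omega
          · exfalso; omega
      refine ⟨fun r => r - L, ?_, ?_⟩
      · intro r hr hw
        obtain ⟨hri, kr, hkr, hre⟩ := key r hr hw
        simp only [Tfun, if_neg hn1, Finset.mem_Icc]
        refine ⟨⟨by omega, by omega⟩, by omega, by omega⟩
      · intro r hr s hsA hwr hws hf
        obtain ⟨hri, kr, hkr, hre⟩ := key r hr hwr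
        obtain ⟨hsi, ks, hks, hse⟩ := key s hsA hws
        have hf' : r - L = s - L := hf
        omega
  · -- downlink cardinality
    show 2 * Nc * n ≤ (S1 B Nc n ∪ S2 B Nc L n).card
    have hdisj : Disjoint (S1 B Nc n) (S2 B Nc L n) :=
      Finset.disjoint_right.2 fun a ha => not_S1_of_S2 hB hNLB hL ha
    rw [Finset.card_union_of_disjoint hdisj, S1_card hB (by omega), S2_card hB hNLB]
    have : 2 * Nc * n = n * Nc + n * Nc := by ring
    omega
end

section
/- If N_c ≥ L + 1 and κ = ⌈(L+1)/2⌉ + N_c − (L+1), then there exists a single cell association C_1,…,C_K with |C_i| ≤ N_c for all i which is a full coverage association ({max(1, i−L),…,i} ⊆ C_i for all i), and which simultaneously admits a combinatorial uplink zero-forcing scheme in which every mobile terminal is active (|D| = K) and a combinatorial downlink zero-forcing scheme with at least 2κ·⌊K/(2κ+L)⌋ active receivers. (Inner bound of Theorem 2 for N_c ≥ L + 1: average uplink-downlink zero-forcing per-user DoF at least (1/2)(1 + 2κ/(2κ+L)).) -/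
namespace JHRaux

lemma blk_eq {n b b' : ℕ} (h1 : b * n < b' * n + n) (h2 : b' * n < b * n + n) : b = b' := by
  have e1 : b * n < (b' + 1) * n := by rw [add_mul, one_mul]; exact h1
  have e2 : b' * n < (b + 1) * n := by rw [add_mul, one_mul]; exact h2
  have f1 := lt_of_mul_lt_mul_right e1 (Nat.zero_le n)
  have f2 := lt_of_mul_lt_mul_right e2 (Nat.zero_le n)
  omega

lemma blockK {K n b : ℕ} (h : b < K / n) : b * n + n ≤ K := by
  have h1 : (b + 1) * n ≤ (K / n) * n := Nat.mul_le_mul_right n (by omega)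
  have h2 : (K / n) * n ≤ K := Nat.div_mul_le_self K n
  rw [add_mul, one_mul] at h1
  omega

def runA (L kappa b : ℕ) : Finset ℕ :=
  Finset.Icc (b * (2*kappa+L) + L/2 + 1) (b * (2*kappa+L) + L/2 + kappa)

def runB (L kappa b : ℕ) : Finset ℕ :=
  Finset.Icc (b * (2*kappa+L) + kappa + L + 1) (b * (2*kappa+L) + 2*kappa + L)

def A (K L kappa : ℕ) : Finset ℕ :=
  (Finset.range (K / (2*kappa+L))).biUnion fun b => runA L kappa b ∪ runB L kappa b

def T (L kappa i : ℕ) : Finset ℕ :=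
  if i ≤ ((i-1)/(2*kappa+L)) * (2*kappa+L) + L/2 + kappa then
    Finset.Icc (((i-1)/(2*kappa+L)) * (2*kappa+L) + 1) (((i-1)/(2*kappa+L)) * (2*kappa+L) + kappa)
  else
    Finset.Icc (((i-1)/(2*kappa+L)) * (2*kappa+L) + L/2 + kappa + 1)
               (((i-1)/(2*kappa+L)) * (2*kappa+L) + L/2 + 2*kappa)

def C (K L kappa i : ℕ) : Finset ℕ :=
  Finset.Icc (max 1 (i - L)) i ∪ (if i ∈ A K L kappa then T L kappa i else ∅)

lemma mem_A {K L kappa i : ℕ} :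
    i ∈ A K L kappa ↔ ∃ b, b < K / (2*kappa+L) ∧
      ((b*(2*kappa+L) + L/2 + 1 ≤ i ∧ i ≤ b*(2*kappa+L) + L/2 + kappa) ∨
       (b*(2*kappa+L) + kappa + L + 1 ≤ i ∧ i ≤ b*(2*kappa+L) + 2*kappa + L)) := by
  simp only [A, runA, runB, Finset.mem_biUnion, Finset.mem_range, Finset.mem_union,
    Finset.mem_Icc]

lemma card_A {K L kappa : ℕ} (hκ : 0 < kappa) :
    (A K L kappa).card = 2 * kappa * (K / (2*kappa+L)) := by
  rw [A, Finset.card_biUnion]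
  · have h : ∀ b ∈ Finset.range (K/(2*kappa+L)),
        (runA L kappa b ∪ runB L kappa b).card = 2*kappa := by
      intro b _
      rw [Finset.card_union_of_disjoint]
      · rw [runA, runB, Nat.card_Icc, Nat.card_Icc]; omega
      · rw [Finset.disjoint_left]
        intro x hx hx'
        rw [runA, Finset.mem_Icc] at hx
        rw [runB, Finset.mem_Icc] at hx'
        omega
    rw [Finset.sum_congr rfl h, Finset.sum_const, Finset.card_range, smul_eq_mul, Nat.mul_comm]
  · intro b hb b' hb' hne
    rw [Function.onFun, Finset.disjoint_left]
    intro x hx hx'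
    simp only [Finset.mem_union, runA, runB, Finset.mem_Icc] at hx hx'
    exact hne (blk_eq (n := 2*kappa+L) (by omega) (by omega))

lemma T_spec {K L kappa i : ℕ} (hi : i ∈ A K L kappa) :
    ∃ b, b < K / (2*kappa+L) ∧
      ((b*(2*kappa+L) + L/2 + 1 ≤ i ∧ i ≤ b*(2*kappa+L) + L/2 + kappa ∧
        T L kappa i = Finset.Icc (b*(2*kappa+L) + 1) (b*(2*kappa+L) + kappa)) ∨
       (b*(2*kappa+L) + kappa + L + 1 ≤ i ∧ i ≤ b*(2*kappa+L) + 2*kappa + L ∧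
        T L kappa i = Finset.Icc (b*(2*kappa+L) + L/2 + kappa + 1)
          (b*(2*kappa+L) + L/2 + 2*kappa))) := by
  obtain ⟨b, hb, hcase⟩ := mem_A.mp hi
  have hdiv : (i-1)/(2*kappa+L) = b := by
    apply Nat.div_eq_of_lt_le
    · omega
    · rw [add_mul, one_mul]; omega
  refine ⟨b, hb, ?_⟩
  rcases hcase with ⟨h1, h2⟩ | ⟨h1, h2⟩
  · exact Or.inl ⟨h1, h2, by rw [T, hdiv, if_pos (by omega)]⟩
  · exact Or.inr ⟨h1, h2, by rw [T, hdiv, if_neg (by omega)]⟩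

lemma cardC_le {L i a bT : ℕ} (ha : 1 ≤ a) :
    (Finset.Icc (max 1 (i - L)) i ∪ Finset.Icc a bT).card
      ≤ (L + 1) + ((i - L) - a) + (bT - i) := by
  rw [← Finset.union_sdiff_self_eq_union]
  refine le_trans (Finset.card_union_le _ _) ?_
  have hsub : Finset.Icc a bT \ Finset.Icc (max 1 (i-L)) i ⊆
      Finset.Icc a (i - L - 1) ∪ Finset.Icc (i+1) bT := by
    intro j hj
    simp only [Finset.mem_sdiff, Finset.mem_Icc, Finset.mem_union, not_and, not_le] at hj ⊢
    omega
  have h2 := (Finset.card_le_card hsub).trans (Finset.card_union_le _ _)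
  simp only [Nat.card_Icc] at h2 ⊢
  omega

end JHRaux
/-- Inner bound of Theorem 2 for `Nc ≥ L + 1` (`κ = ⌈(L+1)/2⌉ + Nc - (L+1)`): a single
full coverage cell association simultaneously admits an uplink zero-forcing scheme in
which every mobile terminal is active and a downlink zero-forcing scheme with at least
`2κ·⌊K/(2κ+L)⌋` active receivers. -/
theorem joint_high_range_achievable (K L Nc : ℕ) (hK : 0 < K) (hL : 0 < L)
    (hNc : L + 1 ≤ Nc) (kappa : ℕ) (hkappa : kappa = (L + 2) / 2 + Nc - (L + 1)) :
    ∃ C : ℕ → Finset ℕ, IsCellAssoc K Nc C ∧ FullCoverage K L C ∧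
      (∃ S : UplinkScheme K L C, S.D.card = K) ∧
      (∃ T : DownlinkScheme K L C, 2 * kappa * (K / (2 * kappa + L)) ≤ T.A.card) := by
  classical
  have hκpos : 0 < kappa := by omega
  refine ⟨JHRaux.C K L kappa, ?_, ?_, ?_, ?_⟩
  · -- IsCellAssoc
    intro i hi
    rw [Finset.mem_Icc] at hi
    constructor
    · intro j hj
      rw [JHRaux.C, Finset.mem_union] at hj
      rw [Finset.mem_Icc]
      rcases hj with hj | hj
      · rw [Finset.mem_Icc] at hj; omega
      · by_cases hiA : i ∈ JHRaux.A K L kappa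
        · rw [if_pos hiA] at hj
          obtain ⟨b, hb, hc⟩ := JHRaux.T_spec hiA
          have hbk := JHRaux.blockK hb
          rcases hc with ⟨h1, h2, hT⟩ | ⟨h1, h2, hT⟩ <;>
            rw [hT, Finset.mem_Icc] at hj <;> omega
        · rw [if_neg hiA] at hj; simp at hj
    · by_cases hiA : i ∈ JHRaux.A K L kappa
      · rw [JHRaux.C, if_pos hiA]
        obtain ⟨b, hb, hc⟩ := JHRaux.T_spec hiA
        rcases hc with ⟨h1, h2, hT⟩ | ⟨h1, h2, hT⟩ <;> rw [hT]
        · exact le_trans (JHRaux.cardC_le (by omega)) (by omega)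
        · exact le_trans (JHRaux.cardC_le (by omega)) (by omega)
      · rw [JHRaux.C, if_neg hiA, Finset.union_empty]
        rw [Nat.card_Icc]
        omega
  · -- FullCoverage
    intro i _
    rw [JHRaux.C]
    exact Finset.subset_union_left
  · -- Uplink
    refine ⟨⟨(Finset.Icc 1 K).image (fun i => (i, i)), fun p q => q.1 < p.1,
      ?_, ?_, ?_, ?_, ?_, ?_, ?_, ?_⟩, ?_⟩
    · intro p _; omega
    · intro p _ q _ r _ h1 h2; omega
    · intro p hp q hq hne
      simp only [Finset.mem_image, Finset.mem_Icc] at hp hq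
      obtain ⟨a, ha, rfl⟩ := hp
      obtain ⟨c, hc, rfl⟩ := hq
      have : a ≠ c := fun h => hne (by rw [h])
      simp only []
      omega
    · intro p hp
      simp only [Finset.mem_image, Finset.mem_Icc] at hp
      obtain ⟨a, ha, rfl⟩ := hp
      simp only [Finset.mem_Icc]
      exact ⟨ha, ha⟩
    · intro p hp
      simp only [Finset.mem_image, Finset.mem_Icc] at hp
      obtain ⟨a, ha, rfl⟩ := hp
      rw [JHRaux.C, Finset.mem_union]
      left
      rw [Finset.mem_Icc]
      simp only []
      omega
    · intro p hp
      simp only [Finset.mem_image, Finset.mem_Icc] at hp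
      obtain ⟨a, ha, rfl⟩ := hp
      exact ⟨by omega, by omega⟩
    · intro p hp q hq hne
      simp only [Finset.mem_image, Finset.mem_Icc] at hp hq
      obtain ⟨a, ha, rfl⟩ := hp
      obtain ⟨c, hc, rfl⟩ := hq
      have : a ≠ c := fun h => hne (by rw [h])
      exact ⟨this, this⟩
    · intro p hp q hq hne hconn
      simp only [Finset.mem_image, Finset.mem_Icc] at hp hq
      obtain ⟨a, ha, rfl⟩ := hp
      obtain ⟨c, hc, rfl⟩ := hq
      obtain ⟨hc1, hc2⟩ := hconn
      simp only [] at hne hc1 hc2 ⊢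
      constructor
      · rw [JHRaux.C, Finset.mem_union]
        left
        rw [Finset.mem_Icc]
        omega
      · omega
    · rw [Finset.card_image_of_injective _ (fun a b h => (Prod.ext_iff.mp h).1),
        Nat.card_Icc]
      omega
  · -- Downlink
    refine ⟨⟨JHRaux.A K L kappa, JHRaux.T L kappa, ?_, ?_, ?_, ?_, ?_⟩, ?_⟩
    · intro i hi
      obtain ⟨b, hb, hc⟩ := JHRaux.mem_A.mp hi
      have hbk := JHRaux.blockK hb
      rw [Finset.mem_Icc]
      omega
    · intro i hi
      rw [JHRaux.C, if_pos hi]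
      exact Finset.subset_union_right
    · intro i hi
      obtain ⟨b, hb, hc⟩ := JHRaux.T_spec hi
      rcases hc with ⟨h1, h2, hT⟩ | ⟨h1, h2, hT⟩ <;> rw [hT] <;>
        exact Finset.nonempty_Icc.mpr (by omega)
    · intro i hi
      obtain ⟨b, hb, hc⟩ := JHRaux.T_spec hi
      rcases hc with ⟨h1, h2, hT⟩ | ⟨h1, h2, hT⟩
      · exact ⟨i - L/2, by rw [hT, Finset.mem_Icc]; omega, by constructor <;> omega⟩
      · exact ⟨i - (L - L/2), by rw [hT, Finset.mem_Icc]; omega, by constructor <;> omega⟩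
    · intro i hi
      obtain ⟨b, hb, hc⟩ := JHRaux.T_spec hi
      rcases hc with ⟨h1, h2, hT⟩ | ⟨h1, h2, hT⟩
      · -- run A of block b
        have key : ∀ r ∈ JHRaux.A K L kappa, (∃ j ∈ JHRaux.T L kappa i, Connected L r j) →
            b*(2*kappa+L) + L/2 + 1 ≤ r ∧ r ≤ b*(2*kappa+L) + L/2 + kappa := by
          rintro r hr ⟨j, hj, hcj⟩
          rw [hT, Finset.mem_Icc] at hj
          obtain ⟨hcj1, hcj2⟩ := hcj
          obtain ⟨b', hb', hc'⟩ := JHRaux.mem_A.mp hr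
          rcases hc' with ⟨g1, g2⟩ | ⟨g1, g2⟩ <;>
          · have hbb := JHRaux.blk_eq (n := 2*kappa+L) (b := b) (b' := b')
              (by omega) (by omega)
            subst hbb
            omega
        refine ⟨fun r => r - L/2, ?_, ?_⟩
        · intro r hr hcov
          have hk := key r hr hcov
          rw [hT]
          dsimp only
          simp only [Finset.mem_Icc, Connected]
          omega
        · intro r hr s hs hcr hcs hfe
          have h1' := key r hr hcr
          have h2' := key s hs hcs
          dsimp only at hfe
          omega
      · -- run B of block b
        have key : ∀ r ∈ JHRaux.A K L kappa, (∃ j ∈ JHRaux.T L kappa i, Connected L r j) →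
            b*(2*kappa+L) + kappa + L + 1 ≤ r ∧ r ≤ b*(2*kappa+L) + 2*kappa + L := by
          rintro r hr ⟨j, hj, hcj⟩
          rw [hT, Finset.mem_Icc] at hj
          obtain ⟨hcj1, hcj2⟩ := hcj
          obtain ⟨b', hb', hc'⟩ := JHRaux.mem_A.mp hr
          rcases hc' with ⟨g1, g2⟩ | ⟨g1, g2⟩ <;>
          · have hbb := JHRaux.blk_eq (n := 2*kappa+L) (b := b) (b' := b')
              (by omega) (by omega)
            subst hbb
            omega
        refine ⟨fun r => r - (L - L/2), ?_, ?_⟩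
        · intro r hr hcov
          have hk := key r hr hcov
          rw [hT]
          dsimp only
          simp only [Finset.mem_Icc, Connected]
          omega
        · intro r hr s hs hcr hcs hfe
          have h1' := key r hr hcr
          have h2' := key s hs hcs
          dsimp only at hfe
          omega
    · exact (JHRaux.card_A hκpos).ge
end
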